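/- arXiv:1201.3528 — 8 statements merged into one kernel-verified Lean document; each statement's English description precedes it below -/
import Mathlib

section
/- Let h(β) = f(β) + Σ_{j∈S} P(|β_j|) be the penalized objective, and assume P'₊(0) ≥ 0. Suppose β ∈ ℝ^p satisfies the stationarity condition: ∂_j f(β) + P'(|β_j|)·sgn(β_j) = 0 for every j ∈ S with β_j ≠ 0, |∂_j f(β)| ≤ P'₊(0) for every j ∈ S with β_j = 0, and ∂_j f(β) = 0 for every j ∉ S. Then every one-sided directional derivative of h at β is nonnegative: d_v h(β) = lim_{t→0⁺} (h(β+tv) − h(β))/t ≥ 0 for all v ∈ ℝ^p. -/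
open Filter Topology

lemma sign_eq_real_sign (x : ℝ) (hx : x ≠ 0) : (SignType.sign x : ℝ) = Real.sign x := by
  rcases lt_or_gt_of_ne hx with h | h
  · rw [Real.sign_of_neg h]; simp [sign_neg h]
  · rw [Real.sign_of_pos h]; simp [sign_pos h]

/-- If `β` satisfies the stationarity condition for the penalized objective
`h(β) = f(β) + ∑_{j ∈ S} P |β_j|` (with `P'₊(0) ≥ 0`), then every one-sided directional
derivative of `h` at `β` exists and is nonnegative. -/
theorem stationary_point_nonneg_directional_derivatives
    {p : ℕ} (S : Finset (Fin p))
    (f : (Fin p → ℝ) → ℝ) (f' : (Fin p → ℝ) → (Fin p → ℝ) →L[ℝ] ℝ)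
    (P P' : ℝ → ℝ) (P0' : ℝ)
    (hf : ∀ β, HasFDerivAt f (f' β) β)
    (hPmono : MonotoneOn P (Set.Ici 0))
    (hP : ∀ t : ℝ, 0 < t → HasDerivAt P (P' t) t)
    (hP0 : HasDerivWithinAt P P0' (Set.Ici 0) 0)
    (hP0nonneg : 0 ≤ P0')
    (β : Fin p → ℝ)
    (hstat1 : ∀ j ∈ S, β j ≠ 0 →
      f' β (Pi.single j 1) + P' |β j| * Real.sign (β j) = 0)
    (hstat2 : ∀ j ∈ S, β j = 0 → |f' β (Pi.single j 1)| ≤ P0')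
    (hstat3 : ∀ j ∉ S, f' β (Pi.single j 1) = 0) :
    ∀ v : Fin p → ℝ, ∃ L : ℝ, 0 ≤ L ∧
      Tendsto
        (fun t : ℝ =>
          ((f (β + t • v) + ∑ j ∈ S, P |(β + t • v) j|) -
            (f β + ∑ j ∈ S, P |β j|)) / t)
        (𝓝[>] (0 : ℝ)) (𝓝 L) := by
  intro v
  classical
  set a : Fin p → ℝ := fun j => f' β (Pi.single j 1) with ha
  set d : Fin p → ℝ := fun j =>
    if β j = 0 then P0' * |v j| else P' |β j| * Real.sign (β j) * v j with hd
  set L : ℝ := f' β v + ∑ j ∈ S, d j with hL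
  -- express f' β v as a sum
  have hv : v = ∑ j, v j • (Pi.single j 1 : Fin p → ℝ) := by
    ext i
    simp [Pi.single_apply, Finset.sum_apply]
  have hfv : f' β v = ∑ j, v j * a j := by
    conv_lhs => rw [hv, map_sum]
    simp [ha]
  have hfv' : f' β v = ∑ j ∈ S, v j * a j := by
    rw [hfv]
    exact (Finset.sum_subset (Finset.subset_univ S)
      (fun j _ hj => by simp [ha, hstat3 j hj])).symm
  -- nonnegativity of L
  have hLnonneg : 0 ≤ L := by
    rw [hL, hfv', ← Finset.sum_add_distrib]
    apply Finset.sum_nonneg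
    intro j hj
    by_cases h0 : β j = 0
    · have h2 := hstat2 j hj h0
      have : |v j * a j| ≤ |v j| * P0' := by
        rw [abs_mul]
        exact mul_le_mul_of_nonneg_left h2 (abs_nonneg _)
      have h3 := neg_abs_le (v j * a j)
      simp only [hd, if_pos h0]
      nlinarith
    · have h1 := hstat1 j hj h0
      simp only [hd, if_neg h0]
      have : v j * a j + P' |β j| * Real.sign (β j) * v j
          = v j * (a j + P' |β j| * Real.sign (β j)) := by ring
      rw [this, h1, mul_zero]
  refine ⟨L, hLnonneg, ?_⟩
  -- the full objective along the ray
  set g : ℝ → ℝ := fun t => f (β + t • v) + ∑ j ∈ S, P |(β + t • v) j| with hg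
  -- derivative of the f part
  have hline : HasDerivAt (fun t : ℝ => β + t • v) v 0 := by
    simpa using ((hasDerivAt_id (0:ℝ)).smul_const v).const_add β
  have h0v : β + (0:ℝ) • v = β := by simp
  have hfpart : HasDerivAt (fun t : ℝ => f (β + t • v)) (f' β v) 0 := by
    have hfb : HasFDerivAt f (f' β) (β + (0:ℝ) • v) := by rw [h0v]; exact hf β
    exact hfb.comp_hasDerivAt 0 hline
  -- derivative of each penalty term within Ici 0
  have hterm : ∀ j ∈ S,
      HasDerivWithinAt (fun t : ℝ => P |(β + t • v) j|) (d j) (Set.Ici 0) 0 := by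
    intro j _
    have happ : ∀ t : ℝ, (β + t • v) j = β j + t * v j := by
      intro t; simp [Pi.add_apply]
    by_cases h0 : β j = 0
    · -- zero coordinate: compose hP0 with t ↦ |v j| * t
      have hinner : HasDerivWithinAt (fun t : ℝ => |v j| * t) (|v j|) (Set.Ici 0) 0 :=
        ((hasDerivAt_id (0:ℝ)).const_mul (|v j|)).hasDerivWithinAt.congr_deriv (by simp)
      have hmaps : Set.MapsTo (fun t : ℝ => |v j| * t) (Set.Ici 0) (Set.Ici 0) :=
        fun t ht => Set.mem_Ici.mpr (mul_nonneg (abs_nonneg _) (Set.mem_Ici.mp ht))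
      have hP0' : HasDerivWithinAt P P0' (Set.Ici 0) (|v j| * 0) := by simpa using hP0
      have hcomp := hP0'.comp (0:ℝ) hinner hmaps
      have : HasDerivWithinAt (fun t : ℝ => P (|v j| * t)) (P0' * |v j|) (Set.Ici 0) 0 := by
        exact hcomp
      refine (this.congr (fun y hy => ?_) (by simp [happ, h0])).congr_deriv (by
        simp [hd, if_pos h0])
      have hy0 : (0:ℝ) ≤ y := hy
      rw [happ, h0, zero_add, abs_mul, abs_of_nonneg hy0, mul_comm]
    · -- nonzero coordinate: full chain rule
      have hβpos : 0 < |β j| := abs_pos.mpr h0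
      have hinner : HasDerivAt (fun t : ℝ => β j + t * v j) (v j) 0 := by
        simpa using ((hasDerivAt_id (0:ℝ)).mul_const (v j)).const_add (β j)
      have habs : HasDerivAt (fun x : ℝ => |x|) ((SignType.sign (β j) : ℝ)) (β j) :=
        hasDerivAt_abs h0
      have habs' : HasDerivAt (fun x : ℝ => |x|) ((SignType.sign (β j) : ℝ))
          (β j + 0 * v j) := by simpa using habs
      have hP' : HasDerivAt P (P' |β j|) |β j + 0 * v j| := by
        simpa using hP _ hβpos
      have hchain := (hP'.comp 0 (habs'.comp 0 hinner))
      have : HasDerivAt (fun t : ℝ => P |β j + t * v j|)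
          (P' |β j| * ((SignType.sign (β j) : ℝ) * v j)) 0 := hchain
      refine ((this.hasDerivWithinAt).congr (fun y _ => by rw [happ])
        (by rw [happ])).congr_deriv ?_
      rw [hd]
      simp only [if_neg h0]
      rw [sign_eq_real_sign _ h0]; ring
  -- total derivative within Ici 0
  have hsum : HasDerivWithinAt (fun t : ℝ => ∑ j ∈ S, P |(β + t • v) j|)
      (∑ j ∈ S, d j) (Set.Ici 0) 0 := HasDerivWithinAt.fun_sum hterm
  have htot : HasDerivWithinAt g L (Set.Ici 0) 0 := hfpart.hasDerivWithinAt.add hsum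
  have hslope : Tendsto (slope g 0) (𝓝[Set.Ici 0 \ {0}] 0) (𝓝 L) :=
    hasDerivWithinAt_iff_tendsto_slope.mp htot
  rw [Set.Ici_sdiff_left] at hslope
  refine hslope.congr fun t => ?_
  have hg0 : g 0 = f β + ∑ j ∈ S, P |β j| := by simp [hg]
  simp [slope_def_field, hg, hg0, div_eq_mul_inv, sub_zero]
end

section
/- Let a > 0, η > 0, b ∈ ℝ, and 0 ≤ ρ ≤ a|b|η. Then β̂ = sgn(b)·[(|b| − η) + ((|b| + η)² − 4ρ/a)^{1/2}]/2 is well defined (the discriminant (|b|+η)² − 4ρ/a is nonnegative) and is a global minimizer of the log-penalized objective g(β) = (a/2)(β − b)² + ρ·ln(η + |β|). -/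
set_option maxHeartbeats 1000000


/-- For the log-penalized scalar problem
`g(β) = (a/2)(β − b)² + ρ·ln(η + |β|)` with `a > 0`, `η > 0` and `0 ≤ ρ ≤ a|b|η`,
the discriminant `(|b|+η)² − 4ρ/a` is nonnegative and
`β̂ = sgn(b)·[(|b| − η) + √((|b|+η)² − 4ρ/a)]/2` is a global minimizer of `g`. -/
theorem log_penalty_nonzero_minimizer
    (a η b ρ : ℝ) (ha : 0 < a) (hη : 0 < η) (hρ0 : 0 ≤ ρ) (hρ1 : ρ ≤ a * |b| * η)
    (g : ℝ → ℝ)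
    (hg : ∀ β : ℝ, g β = a / 2 * (β - b) ^ 2 + ρ * Real.log (η + |β|))
    (βh : ℝ)
    (hβh : βh = Real.sign b *
      ((|b| - η) + Real.sqrt ((|b| + η) ^ 2 - 4 * ρ / a)) / 2) :
    0 ≤ (|b| + η) ^ 2 - 4 * ρ / a ∧
    ∀ β : ℝ, g βh ≤ g β := by
  set c := |b| with hc
  have hc0 : 0 ≤ c := abs_nonneg b
  have hρa : 4 * ρ / a ≤ 4 * c * η := by
    rw [div_le_iff₀ ha]; nlinarith
  have hD : 0 ≤ (c + η) ^ 2 - 4 * ρ / a := by nlinarith [sq_nonneg (c - η)]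
  set s := Real.sqrt ((c + η) ^ 2 - 4 * ρ / a) with hsdef
  have hs0 : 0 ≤ s := Real.sqrt_nonneg _
  have hs2 : s ^ 2 = (c + η) ^ 2 - 4 * ρ / a := Real.sq_sqrt hD
  have has2 : a * s ^ 2 = a * (c + η) ^ 2 - 4 * ρ := by
    rw [hs2]; field_simp
  have hslb : η - c ≤ s := by nlinarith [sq_nonneg (s - (η - c)), sq_nonneg (s + (η - c))]
  have hslb' : c - η ≤ s := by nlinarith [sq_nonneg (s - (c - η)), sq_nonneg (s + (c - η))]
  set t := (c - η + s) / 2 with htdef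
  set t' := (c - η - s) / 2 with ht'def
  have ht0 : 0 ≤ t := by simp only [htdef]; linarith
  have ht'0 : t' ≤ 0 := by simp only [ht'def]; linarith
  -- stationarity and factorization
  have hfac : ∀ u : ℝ, a * (u - c) * (u + η) + ρ = a * (u - t) * (u - t') := by
    intro u
    simp only [htdef, ht'def]
    linear_combination (1/4 : ℝ) * has2
  have hE : a * (t - c) * (t + η) + ρ = 0 := by
    have := hfac t; simp at this; linarith [this]
  have htc : t ≤ c := by
    by_contra h
    push_neg at h
    have h1 : 0 < t - c := by linarith
    have h2 : 0 < t + η := by linarith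
    nlinarith [mul_pos h1 h2, hE]
  -- the reduced one-dimensional function
  set H : ℝ → ℝ := fun u => a / 2 * (u - c) ^ 2 + ρ * Real.log (η + u) with hH
  -- derivative of H
  have hderiv : ∀ u : ℝ, 0 < η + u →
      HasDerivAt H (a * (u - c) + ρ * (η + u)⁻¹) u := by
    intro u hu
    have h1 : HasDerivAt (fun x : ℝ => (x - c) ^ 2) (2 * (u - c)) u := by
      simpa using ((hasDerivAt_id u).sub_const c).fun_pow 2
    have h2 : HasDerivAt (fun x : ℝ => Real.log (η + x)) ((η + u)⁻¹) u := by
      have := (Real.hasDerivAt_log (ne_of_gt hu)).comp u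
        ((hasDerivAt_const u η).add (hasDerivAt_id u))
      simpa [Function.comp_def] using this
    have := (h1.const_mul (a / 2)).add (h2.const_mul ρ)
    exact this.congr_deriv (by ring)
  -- global minimality of t for H on [0, ∞)
  have hkey : ∀ u : ℝ, 0 ≤ u → H t ≤ H u := by
    intro u hu
    rcases le_total u t with hut | htu
    · -- antitone on [0, t]
      have hanti : AntitoneOn H (Set.Icc 0 t) := by
        apply antitoneOn_of_deriv_nonpos (convex_Icc 0 t)
        · intro x hx
          have hx0 : 0 < η + x := by linarith [hx.1]
          exact (hderiv x hx0).differentiableAt.continuousAt.continuousWithinAt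
        · intro x hx
          rw [interior_Icc] at hx
          have hx0 : 0 < η + x := by linarith [hx.1]
          exact (hderiv x hx0).differentiableAt.differentiableWithinAt
        · intro x hx
          rw [interior_Icc] at hx
          have hx0 : 0 < η + x := by linarith [hx.1]
          rw [(hderiv x hx0).deriv]
          have hq : a * (x - t) * (x - t') ≤ 0 := by
            have h1 : x - t ≤ 0 := by linarith [hx.2]
            have h2 : 0 ≤ x - t' := by linarith [hx.1]
            nlinarith [mul_nonneg (neg_nonneg.2 h1) h2]
          have h3 : a * (x - c) * (x + η) + ρ ≤ 0 := by rw [hfac x]; exact hq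
          have h7 : (η + x)⁻¹ * (η + x) = 1 := inv_mul_cancel₀ hx0.ne'
          have h4 : a * (x - c) + ρ * (η + x)⁻¹ =
              (a * (x - c) * (x + η) + ρ) * (η + x)⁻¹ := by
            linear_combination (-(a * (x - c))) * h7
          rw [h4]
          exact mul_nonpos_of_nonpos_of_nonneg h3 (inv_nonneg.2 hx0.le)
      exact hanti ⟨hu, hut⟩ ⟨ht0, le_refl t⟩ hut
    · -- monotone on [t, ∞)
      have hmono : MonotoneOn H (Set.Ici t) := by
        apply monotoneOn_of_deriv_nonneg (convex_Ici t)
        · intro x hx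
          have hx0 : 0 < η + x := by have := hx; simp at this; linarith
          exact (hderiv x hx0).differentiableAt.continuousAt.continuousWithinAt
        · intro x hx
          rw [interior_Ici] at hx
          have hx0 : 0 < η + x := by have : t < x := hx; linarith
          exact (hderiv x hx0).differentiableAt.differentiableWithinAt
        · intro x hx
          rw [interior_Ici] at hx
          have hxt : t < x := hx
          have hx0 : 0 < η + x := by linarith
          rw [(hderiv x hx0).deriv]
          have hq : 0 ≤ a * (x - t) * (x - t') := by
            have h1 : 0 ≤ x - t := by linarith
            have h2 : 0 ≤ x - t' := by linarith
            nlinarith [mul_nonneg h1 h2]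
          have h3 : 0 ≤ a * (x - c) * (x + η) + ρ := by rw [hfac x]; exact hq
          have h7 : (η + x)⁻¹ * (η + x) = 1 := inv_mul_cancel₀ hx0.ne'
          have h4 : a * (x - c) + ρ * (η + x)⁻¹ =
              (a * (x - c) * (x + η) + ρ) * (η + x)⁻¹ := by
            linear_combination (-(a * (x - c))) * h7
          rw [h4]
          exact mul_nonneg h3 (inv_nonneg.2 hx0.le)
      exact hmono (Set.self_mem_Ici) htu htu
  -- g β ≥ H |β|
  have hlower : ∀ β : ℝ, H (|β|) ≤ g β := by
    intro β
    rw [hg, hH]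
    simp only [hc]
    have : (|β| - |b|) ^ 2 ≤ (β - b) ^ 2 := by
      nlinarith [le_abs_self (β * b), abs_mul β b, sq_abs β, sq_abs b]
    nlinarith
  -- g βh = H t
  have hval : g βh = H t := by
    have habs : |βh| = t ∧ (βh - b) ^ 2 = (t - c) ^ 2 := by
      rcases lt_trichotomy b 0 with hb | hb | hb
      · have hsgn : Real.sign b = -1 := Real.sign_of_neg hb
        have hcb : c = -b := abs_of_neg hb
        have hβ : βh = -t := by rw [hβh, hsgn, htdef]; ring
        constructor
        · rw [hβ, abs_of_nonpos (by linarith)]; ring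
        · rw [hβ, hcb]; ring
      · have hsgn : Real.sign b = 0 := by rw [hb, Real.sign_zero]
        have hcb : c = 0 := by rw [hc, hb, abs_zero]
        have hρz : ρ = 0 := by
          have hz : a * c * η = 0 := by rw [hcb]; ring
          linarith
        have hsv : s = η := by
          rw [hsdef, hcb, hρz]
          simp [Real.sqrt_sq hη.le]
        have htv : t = 0 := by rw [htdef, hcb, hsv]; ring
        have hβ : βh = 0 := by rw [hβh, hsgn]; ring
        constructor
        · rw [hβ, htv, abs_zero]
        · rw [hβ, htv, hcb, hb]
      · have hsgn : Real.sign b = 1 := Real.sign_of_pos hb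
        have hcb : c = b := abs_of_pos hb
        have hβ : βh = t := by rw [hβh, hsgn, htdef]; ring
        constructor
        · rw [hβ, abs_of_nonneg ht0]
        · rw [hβ, hcb]
      
    rw [hg, hH, habs.1, habs.2]
  refine ⟨hD, fun β => ?_⟩
  calc g βh = H t := hval
    _ ≤ H (|β|) := hkey _ (abs_nonneg β)
    _ ≤ g β := hlower β
end

section
/- Let a > 0, η > 0, b ∈ ℝ, and ρ ≥ a(η + |b|)²/4. Then β = 0 is a global minimizer of the log-penalized objective g(β) = (a/2)(β − b)² + ρ·ln(η + |β|). -/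
private lemma log_pen_aux (a η c ρ : ℝ) (ha : 0 < a) (hη : 0 < η)
    (hρ : a * (η + c) ^ 2 / 4 ≤ ρ) (t : ℝ) (ht : 0 ≤ t) :
    a / 2 * c ^ 2 + ρ * Real.log η ≤ a / 2 * (t - c) ^ 2 + ρ * Real.log (η + t) := by
  set f : ℝ → ℝ := fun s => a / 2 * (s - c) ^ 2 + ρ * Real.log (η + s) with hf
  have key : ∀ x : ℝ, -η < x → HasDerivAt f (a * (x - c) + ρ * (η + x)⁻¹) x := by
    intro x hx
    have hne : η + x ≠ 0 := by linarith
    have hb : HasDerivAt (fun s : ℝ => s - c) 1 x := (hasDerivAt_id x).sub_const c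
    have h1 := (hb.pow 2).const_mul (a / 2)
    have h2 : HasDerivAt (fun s : ℝ => η + s) 1 x := (hasDerivAt_id x).const_add η
    have h3 := ((Real.hasDerivAt_log hne).comp x h2).const_mul ρ
    have := h1.add h3
    convert this using 1
    · rfl
    · rfl
    · rfl
    · norm_num
      ring
  have hmono : MonotoneOn f (Set.Ici (0 : ℝ)) := by
    apply monotoneOn_of_deriv_nonneg (convex_Ici 0)
    · intro x hx
      exact ((key x (by simp at hx; linarith)).continuousAt).continuousWithinAt
    · intro x hx
      rw [interior_Ici] at hx
      exact ((key x (by simp at hx; linarith)).differentiableAt).differentiableWithinAt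
    · intro x hx
      rw [interior_Ici] at hx
      have hx0 : (0 : ℝ) < x := hx
      rw [(key x (by linarith)).deriv]
      have hpos : 0 < η + x := by linarith
      have h2 : 0 ≤ a * (x - c) * (η + x) + ρ := by
        nlinarith [sq_nonneg (x - (c - η) / 2), sq_nonneg (η + x)]
      have heq : a * (x - c) + ρ * (η + x)⁻¹ = (a * (x - c) * (η + x) + ρ) / (η + x) := by
        field_simp
      rw [heq]
      exact div_nonneg h2 hpos.le
  have h0 : f 0 ≤ f t := hmono (Set.self_mem_Ici) (Set.mem_Ici.mpr ht) ht
  simpa [hf, neg_sq, add_zero] using h0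

/-- For the log-penalized scalar problem
`g(β) = (a/2)(β − b)² + ρ·ln(η + |β|)` with `a > 0`, `η > 0` and `ρ ≥ a(η + |b|)²/4`,
the point `β = 0` is a global minimizer of `g`. -/
theorem log_penalty_zero_minimizer
    (a η b ρ : ℝ) (ha : 0 < a) (hη : 0 < η) (hρ : a * (η + |b|) ^ 2 / 4 ≤ ρ)
    (g : ℝ → ℝ)
    (hg : ∀ β : ℝ, g β = a / 2 * (β - b) ^ 2 + ρ * Real.log (η + |β|)) :
    ∀ β : ℝ, g 0 ≤ g β := by
  intro β
  rw [hg 0, hg β]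
  have haux := log_pen_aux a η |b| ρ ha hη hρ |β| (abs_nonneg β)
  have hsq : (|β| - |b|) ^ 2 ≤ (β - b) ^ 2 := by
    have h1 : β * b ≤ |β| * |b| := by
      rw [← abs_mul]; exact le_abs_self _
    nlinarith [sq_abs β, sq_abs b]
  have hb2 : |b| ^ 2 = b ^ 2 := sq_abs b
  simp only [abs_zero, add_zero] at *
  nlinarith
end

section
/- Let a > 0, b ∈ ℝ, and η ≥ |b| with η > 0. Then for every ρ ≥ a|b|η, the point β = 0 is the unique global minimizer of the log-penalized objective g(β) = (a/2)(β − b)² + ρ·ln(η + |β|); in particular there is no nonzero stationary point, so the solution path is continuous in ρ whenever η ≥ |b| (the nonzero branch given by sgn(b)·[(|b|−η) + ((|b|+η)² − 4ρ/a)^{1/2}]/2 meets 0 exactly at ρ = a|b|η). -/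
lemma log_lower_aux (x : ℝ) (hx : 0 < x) : x - x ^ 2 / 2 < Real.log (1 + x) := by
  have h : StrictMonoOn (fun y : ℝ => Real.log (1 + y) - (y - y ^ 2 / 2)) (Set.Ici 0) := by
    apply strictMonoOn_of_deriv_pos (convex_Ici 0)
    · apply ContinuousOn.sub
      · apply Real.continuousOn_log.comp (by fun_prop)
        intro y hy
        simp only [Set.mem_Ici] at hy
        simp only [Set.mem_compl_iff, Set.mem_singleton_iff]
        intro h; linarith [h]
      · fun_prop
    · intro y hy
      rw [interior_Ici] at hy
      simp only [Set.mem_Ioi] at hy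
      have h1 : HasDerivAt (fun y : ℝ => 1 + y) 1 y := by
        simpa using (hasDerivAt_id y).const_add 1
      have h2 : HasDerivAt (fun y : ℝ => Real.log (1 + y)) ((1 + y)⁻¹ * 1) y :=
        (Real.hasDerivAt_log (by linarith)).comp y h1
      have h3 : HasDerivAt (fun y : ℝ => y - y ^ 2 / 2) (1 - 2 * y / 2) y := by
        simpa [Pi.sub_def, id] using (hasDerivAt_id y).sub ((hasDerivAt_pow 2 y).div_const 2)
      have hd := h2.sub h3
      rw [show (fun y : ℝ => Real.log (1 + y) - (y - y ^ 2 / 2)) = ((fun y : ℝ => Real.log (1 + y)) - fun y : ℝ => y - y ^ 2 / 2) from rfl, hd.deriv]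
      have heq : (1 + y)⁻¹ * 1 - (1 - 2 * y / 2) = y ^ 2 / (1 + y) := by
        field_simp; ring
      rw [heq]; positivity
  have h0 : (0 : ℝ) ∈ Set.Ici (0 : ℝ) := Set.self_mem_Ici
  have hx' : x ∈ Set.Ici (0 : ℝ) := Set.mem_Ici.mpr hx.le
  have := h h0 hx' hx
  simp only [Real.log_one, add_zero] at this
  simp at this
  linarith


/-- For the log-penalized scalar problem with `a > 0`, `η > 0` and
`η ≥ |b|`, for every `ρ ≥ a|b|η` the point `β = 0` is the unique global minimizer of
`g(β) = (a/2)(β − b)² + ρ·ln(η + |β|)`; moreover the nonzero branch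
`sgn(b)·[(|b|−η) + √((|b|+η)² − 4ρ/a)]/2` meets `0` exactly at `ρ = a|b|η`, so the
solution path is continuous whenever `η ≥ |b|`. -/
theorem log_penalty_continuous_path
    (a η b : ℝ) (ha : 0 < a) (hη : 0 < η) (hηb : |b| ≤ η)
    (g : ℝ → ℝ → ℝ)
    (hg : ∀ ρ β : ℝ, g ρ β = a / 2 * (β - b) ^ 2 + ρ * Real.log (η + |β|)) :
    (∀ ρ : ℝ, a * |b| * η ≤ ρ →
      ∀ β : ℝ, β ≠ 0 → g ρ 0 < g ρ β) ∧
    Real.sign b *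
      ((|b| - η) + Real.sqrt ((|b| + η) ^ 2 - 4 * (a * |b| * η) / a)) / 2 = 0 := by
  constructor
  · intro ρ hρ β hβ
    rw [hg, hg]
    have ht : 0 < |β| := abs_pos.mpr hβ
    set t := |β| with htdef
    -- log(η+t) = log η + log(1 + t/η)
    have hLdef : Real.log (η + t) = Real.log η + Real.log (1 + t / η) := by
      rw [← Real.log_mul (by positivity) (by positivity)]
      congr 1
      field_simp
    set L := Real.log (1 + t / η) with hLd
    have hLpos : 0 < L := Real.log_pos (by rw [lt_add_iff_pos_right]; positivity)
    have hkey : t / η - (t / η) ^ 2 / 2 < L := log_lower_aux _ (by positivity)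
    -- cleared form: η*t - t^2/2 < η^2 * L
    have hkey2 : η * t - t ^ 2 / 2 < η ^ 2 * L := by
      have := mul_lt_mul_of_pos_left hkey (show (0:ℝ) < η ^ 2 by positivity)
      calc η * t - t ^ 2 / 2 = η ^ 2 * (t / η - (t / η) ^ 2 / 2) := by field_simp
        _ < η ^ 2 * L := this
    have hbβ : b * β ≤ |b| * t := by
      calc b * β ≤ |b * β| := le_abs_self _
        _ = |b| * t := abs_mul b β
    have hsq : β ^ 2 = t ^ 2 := (sq_abs β).symm
    have hc : 0 ≤ |b| := abs_nonneg b
    have h1 : 0 ≤ (ρ - a * |b| * η) * L := mul_nonneg (by linarith) hLpos.le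
    rw [hLdef]
    simp only [abs_zero, add_zero]
    have h2 : a * |b| * (η * t - t ^ 2 / 2) ≤ a * |b| * (η ^ 2 * L) :=
      mul_le_mul_of_nonneg_left hkey2.le (by positivity)
    have h1' : 0 ≤ (ρ - a * |b| * η) * L * η := mul_nonneg h1 hη.le
    have h3 : 0 ≤ a * (η - |b|) * t ^ 2 := by
      have : 0 ≤ η - |b| := by linarith
      positivity
    have hρ0 : 0 ≤ ρ := le_trans (by positivity) hρ
    have htpos : 0 < a * t ^ 2 := by positivity
    have h4 : ρ * L > a * |b| * t - a * t ^ 2 / 2 := by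
      rcases eq_or_lt_of_le hc with hc0 | hc0
      · have hb0 : (|b| : ℝ) = 0 := hc0.symm
        rw [hb0]
        have : 0 ≤ ρ * L := mul_nonneg hρ0 hLpos.le
        nlinarith
      · have h5 : η * (ρ * L) > η * (a * |b| * t - a * t ^ 2 / 2) := by
          have h2s : a * |b| * (η * t - t ^ 2 / 2) < a * |b| * (η ^ 2 * L) :=
            mul_lt_mul_of_pos_left hkey2 (by positivity)
          nlinarith [h1', h2s, h3]
        exact lt_of_mul_lt_mul_left (by linarith) hη.le
    have hbβ' : a * (b * β) ≤ a * (|b| * t) := mul_le_mul_of_nonneg_left hbβ ha.le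
    nlinarith [h4, hbβ', hsq]
  · have heq : (|b| + η) ^ 2 - 4 * (a * |b| * η) / a = (η - |b|) ^ 2 := by
      field_simp; ring
    rw [heq, Real.sqrt_sq (by linarith)]
    ring
end

section
/- Let a ≥ 1 and b ∈ ℝ. For the continuous log penalty objective g_ρ(β) = (a/2)(β − b)² + ρ·ln(√ρ + |β|) with ρ > 0: (i) if 0 < ρ ≤ a²b², then the discriminant (|b| + √ρ)² − 4ρ/a is nonnegative and β̂(ρ) = sgn(b)·[(|b| − √ρ) + ((|b| + √ρ)² − 4ρ/a)^{1/2}]/2 is a global minimizer of g_ρ; (ii) if ρ ≥ a²b², then β̂(ρ) = 0 is a global minimizer of g_ρ. Moreover the resulting map ρ ↦ β̂(ρ) is continuous on (0,∞). -/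
lemma keylem (a B t c : ℝ) (ht : 0 < t) (βs : ℝ) (hβs : 0 ≤ βs)
    (hneg : ∀ x, 0 < x → x < βs → a*(x - B)*(t + x) + c ≤ 0)
    (hpos : ∀ x, βs < x → 0 ≤ a*(x - B)*(t + x) + c) :
    ∀ s, 0 ≤ s →
      a/2*(βs - B)^2 + c * Real.log (t + βs) ≤ a/2*(s - B)^2 + c * Real.log (t + s) := by
  set h : ℝ → ℝ := fun s => a/2*(s - B)^2 + c * Real.log (t + s) with hh
  have hd : ∀ x : ℝ, 0 ≤ x → HasDerivAt h ((a*(x - B)*(t + x) + c)/(t + x)) x := by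
    intro x hx
    have htx : (0:ℝ) < t + x := by linarith
    have h1 : HasDerivAt (fun s : ℝ => (s - B)^2) (2*(x - B)) x := by
      simpa using ((hasDerivAt_id x).sub_const B).fun_pow 2
    have h2 : HasDerivAt (fun s : ℝ => Real.log (t + s)) (1/(t + x)) x := by
      simpa using (((hasDerivAt_id x).const_add t).log (ne_of_gt htx))
    have h3 := (h1.const_mul (a/2)).fun_add (h2.const_mul c)
    refine h3.congr_deriv ?_
    field_simp
  have hmono : MonotoneOn h (Set.Ici βs) := by
    apply monotoneOn_of_deriv_nonneg (convex_Ici βs)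
    · intro x hx
      exact ((hd x (le_trans hβs hx)).differentiableAt).continuousAt.continuousWithinAt
    · intro x hx
      rw [interior_Ici] at hx
      exact ((hd x (hβs.trans (le_of_lt hx))).differentiableAt).differentiableWithinAt
    · intro x hx
      rw [interior_Ici] at hx
      have hx0 : 0 ≤ x := hβs.trans (le_of_lt hx)
      rw [(hd x hx0).deriv]
      exact div_nonneg (hpos x hx) (by linarith)
  have hanti : AntitoneOn h (Set.Icc 0 βs) := by
    apply antitoneOn_of_deriv_nonpos (convex_Icc 0 βs)
    · intro x hx
      exact ((hd x hx.1).differentiableAt).continuousAt.continuousWithinAt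
    · intro x hx
      rw [interior_Icc] at hx
      exact ((hd x hx.1.le).differentiableAt).differentiableWithinAt
    · intro x hx
      rw [interior_Icc] at hx
      rw [(hd x hx.1.le).deriv]
      apply div_nonpos_of_nonpos_of_nonneg (hneg x hx.1 hx.2)
      linarith [hx.1]
  intro s hs
  rcases le_total s βs with hc | hc
  · exact hanti ⟨hs, hc⟩ ⟨hβs, le_refl βs⟩ hc
  · exact hmono (Set.mem_Ici.mpr (le_refl βs)) (Set.mem_Ici.mpr hc) hc



set_option maxHeartbeats 1000000

/-- For the continuous log penalty objective
`g_ρ(β) = (a/2)(β − b)² + ρ·ln(√ρ + |β|)` with `a ≥ 1`: (i) for `0 < ρ ≤ a²b²` the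
discriminant `(|b| + √ρ)² − 4ρ/a` is nonnegative and
`β̂(ρ) = sgn(b)·[(|b| − √ρ) + √((|b| + √ρ)² − 4ρ/a)]/2` is a global minimizer;
(ii) for `ρ ≥ a²b²` the point `0` is a global minimizer; and the map `ρ ↦ β̂(ρ)` is
continuous on `(0,∞)`. -/
theorem continuous_log_penalty_path
    (a b : ℝ) (ha : 1 ≤ a)
    (g : ℝ → ℝ → ℝ)
    (hg : ∀ ρ β : ℝ, g ρ β = a / 2 * (β - b) ^ 2 + ρ * Real.log (Real.sqrt ρ + |β|))
    (βhat : ℝ → ℝ)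
    (hβhat : ∀ ρ : ℝ, βhat ρ =
      if ρ < a ^ 2 * b ^ 2 then
        Real.sign b *
          ((|b| - Real.sqrt ρ) +
            Real.sqrt ((|b| + Real.sqrt ρ) ^ 2 - 4 * ρ / a)) / 2
      else 0) :
    (∀ ρ : ℝ, 0 < ρ → ρ ≤ a ^ 2 * b ^ 2 →
      0 ≤ (|b| + Real.sqrt ρ) ^ 2 - 4 * ρ / a ∧
      ∀ β : ℝ,
        g ρ (Real.sign b *
          ((|b| - Real.sqrt ρ) +
            Real.sqrt ((|b| + Real.sqrt ρ) ^ 2 - 4 * ρ / a)) / 2) ≤ g ρ β) ∧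
    (∀ ρ : ℝ, 0 < ρ → a ^ 2 * b ^ 2 ≤ ρ → ∀ β : ℝ, g ρ 0 ≤ g ρ β) ∧
    ContinuousOn βhat (Set.Ioi 0) := by
  refine ⟨?_, ?_, ?_⟩
  · intro ρ hρ hρle
    have ha0 : (0:ℝ) < a := lt_of_lt_of_le one_pos ha
    set t := Real.sqrt ρ with htdef
    have ht : 0 < t := Real.sqrt_pos.mpr hρ
    have hρt : t^2 = ρ := Real.sq_sqrt hρ.le
    set B := |b| with hBdef
    have hB : 0 ≤ B := abs_nonneg b
    have htab : t ≤ a * B := by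
      have h1 : t^2 ≤ (a*B)^2 := by
        rw [hρt]
        calc ρ ≤ a^2*b^2 := hρle
          _ = (a*B)^2 := by rw [hBdef, mul_pow, sq_abs]
      exact le_of_pow_le_pow_left₀ two_ne_zero (mul_nonneg ha0.le hB) h1
    set Dv := (B + t)^2 - 4*ρ/a with hDvdef
    have hDa : a * Dv = a*(B+t)^2 - 4*ρ := by
      rw [hDvdef]; field_simp
    have haD : 0 ≤ a * Dv := by
      rw [hDa]
      nlinarith [sq_nonneg (a*B - t), sq_nonneg (t*(a-1)),
        mul_nonneg (mul_nonneg (sub_nonneg.2 htab) ht.le) (by linarith : (0:ℝ) ≤ 1+a), hρt]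
    have hD : 0 ≤ Dv := le_of_mul_le_mul_left (by simpa using haD) ha0
    have hsD : Real.sqrt Dv ^ 2 = Dv := Real.sq_sqrt hD
    have hDge : (B - t)^2 ≤ Dv := by
      have h4 : a*(B - t)^2 ≤ a*Dv := by
        rw [hDa]
        nlinarith [mul_nonneg (sub_nonneg.mpr htab) ht.le, hρt]
      exact le_of_mul_le_mul_left h4 ha0
    have hsDge : |B - t| ≤ Real.sqrt Dv := by
      rw [← Real.sqrt_sq_eq_abs]
      exact Real.sqrt_le_sqrt hDge
    set βs := (B - t + Real.sqrt Dv)/2 with hβsdef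
    have hβs0 : 0 ≤ βs := by
      have := neg_abs_le (B - t)
      rw [hβsdef]; linarith
    have hsq' : a * (Real.sqrt Dv)^2 = a*(B+t)^2 - 4*ρ := by rw [hsD]; exact hDa
    have hstat : a*βs^2 + a*(t - B)*βs + (t^2 - a*B*t) = 0 := by
      rw [hβsdef]
      linear_combination (1/4) * hsq' + hρt
    have hβm : B - t - βs ≤ 0 := by
      have hkey : a*βs*(B - t - βs) = t^2 - a*B*t := by linear_combination -hstat
      by_contra hc
      push_neg at hc
      have hBt : t < B := by linarith
      nlinarith [mul_nonneg (mul_nonneg ha0.le hβs0) hc.le,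
        mul_nonneg (mul_nonneg (sub_nonneg.mpr ha) hB) ht.le,
        mul_pos ht (sub_pos.mpr hBt)]
    have hfact : ∀ x : ℝ, a*(x - B)*(t + x) + ρ = a*(x - βs)*(x - (B - t - βs)) := by
      intro x
      linear_combination hstat - hρt
    have hneg : ∀ x, 0 < x → x < βs → a*(x - B)*(t + x) + ρ ≤ 0 := by
      intro x hx1 hx2
      rw [hfact x]
      have h1 : x - βs ≤ 0 := by linarith
      have h2 : 0 ≤ x - (B - t - βs) := by linarith
      nlinarith [mul_nonpos_of_nonpos_of_nonneg h1 h2]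
    have hpos : ∀ x, βs < x → 0 ≤ a*(x - B)*(t + x) + ρ := by
      intro x hx
      rw [hfact x]
      have h1 : 0 ≤ x - βs := by linarith
      have h2 : 0 ≤ x - (B - t - βs) := by linarith
      positivity
    have hmin := keylem a B t ρ ht βs hβs0 hneg hpos
    have hb : b ≠ 0 := by
      intro h
      rw [h] at hρle
      simp at hρle
      linarith
    refine ⟨hD, ?_⟩
    intro β
    have hP : Real.sign b * ((B - t) + Real.sqrt Dv) / 2 = Real.sign b * βs := by
      rw [hβsdef]; ring
    have habs : |Real.sign b * βs| = βs := by
      rcases hb.lt_or_gt with hbneg | hbpos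
      · rw [Real.sign_of_neg hbneg]; rw [abs_of_nonpos (by linarith)]; ring
      · rw [Real.sign_of_pos hbpos]; rw [abs_of_nonneg (by linarith)]; ring
    have hsqP : (Real.sign b * βs - b)^2 = (βs - B)^2 := by
      rcases hb.lt_or_gt with hbneg | hbpos
      · rw [Real.sign_of_neg hbneg, hBdef, abs_of_neg hbneg]; ring
      · rw [Real.sign_of_pos hbpos, hBdef, abs_of_pos hbpos]; ring
    rw [hg, hg, hP, habs, hsqP]
    have step1 : a/2*(βs - B)^2 + ρ * Real.log (t + βs) ≤
        a/2*(|β| - B)^2 + ρ * Real.log (t + |β|) := hmin |β| (abs_nonneg β)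
    have hbb : b*β ≤ B*|β| := by rw [hBdef, ← abs_mul]; exact le_abs_self _
    have hB2 : B^2 = b^2 := by rw [hBdef]; exact sq_abs b
    have hid : (β - b)^2 - (|β| - B)^2 = 2*(B*|β| - b*β) := by
      linear_combination (-1) * sq_abs β - hB2
    have step2 : (|β| - B)^2 ≤ (β - b)^2 := by linarith
    have step3 := mul_le_mul_of_nonneg_left step2 (le_of_lt (by linarith : (0:ℝ) < a/2))
    calc a/2*(βs - B)^2 + ρ * Real.log (t + βs)
        ≤ a/2*(|β| - B)^2 + ρ * Real.log (t + |β|) := step1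
      _ ≤ a/2*(β - b)^2 + ρ * Real.log (t + |β|) := by linarith
  · intro ρ hρ hρge β
    have ha0 : (0:ℝ) < a := lt_of_lt_of_le one_pos ha
    set t := Real.sqrt ρ with htdef
    have ht : 0 < t := Real.sqrt_pos.mpr hρ
    have hρt : t^2 = ρ := Real.sq_sqrt hρ.le
    set B := |b| with hBdef
    have hB : 0 ≤ B := abs_nonneg b
    have htab : a * B ≤ t := by
      have h1 : (a*B)^2 ≤ t^2 := by
        rw [hρt]
        calc (a*B)^2 = a^2*b^2 := by rw [hBdef, mul_pow, sq_abs]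
          _ ≤ ρ := hρge
      exact le_of_pow_le_pow_left₀ two_ne_zero ht.le h1
    have htB : B ≤ t := by nlinarith [mul_nonneg (sub_nonneg.2 ha) hB]
    have hneg : ∀ x, 0 < x → x < (0:ℝ) → a*(x - B)*(t + x) + ρ ≤ 0 := by
      intro x h1 h2; linarith
    have hpos : ∀ x, (0:ℝ) < x → 0 ≤ a*(x - B)*(t + x) + ρ := by
      intro x hx
      nlinarith [mul_nonneg (mul_nonneg ha0.le (sub_nonneg.2 htB)) hx.le,
        mul_nonneg ht.le (sub_nonneg.2 htab),
        mul_nonneg ha0.le (sq_nonneg x), hρt]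
    have hmin := keylem a B t ρ ht 0 le_rfl hneg hpos
    rw [hg, hg]
    have step1 := hmin |β| (abs_nonneg β)
    have hbb : b*β ≤ B*|β| := by rw [hBdef, ← abs_mul]; exact le_abs_self _
    have hB2 : B^2 = b^2 := by rw [hBdef]; exact sq_abs b
    have hid : (β - b)^2 - (|β| - B)^2 = 2*(B*|β| - b*β) := by
      linear_combination (-1) * sq_abs β - hB2
    have step2 : (|β| - B)^2 ≤ (β - b)^2 := by linarith
    have step3 := mul_le_mul_of_nonneg_left step2 (le_of_lt (by linarith : (0:ℝ) < a/2))
    have h0 : (0 - b)^2 = ((0:ℝ) - B)^2 := by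
      rw [hBdef]; simp [sq_abs]
    rw [abs_zero, h0]
    calc a/2*(0 - B)^2 + ρ * Real.log (t + 0)
        ≤ a/2*(|β| - B)^2 + ρ * Real.log (t + |β|) := step1
      _ ≤ a/2*(β - b)^2 + ρ * Real.log (t + |β|) := by linarith
  · have ha0 : (0:ℝ) < a := lt_of_lt_of_le one_pos ha
    set K := a ^ 2 * b ^ 2 with hK
    set F : ℝ → ℝ := fun ρ =>
      Real.sign b *
        ((|b| - Real.sqrt (min ρ K)) +
          Real.sqrt ((|b| + Real.sqrt (min ρ K)) ^ 2 - 4 * (min ρ K) / a)) / 2 with hF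
    have hm : Continuous fun ρ : ℝ => min ρ K := continuous_id.min continuous_const
    have hs1 : Continuous fun ρ : ℝ => Real.sqrt (min ρ K) := Real.continuous_sqrt.comp hm
    have hFc : Continuous F := by
      apply Continuous.div_const
      apply Continuous.mul continuous_const
      apply Continuous.add (continuous_const.sub hs1)
      exact Real.continuous_sqrt.comp
        (((continuous_const.add hs1).pow 2).sub ((continuous_const.mul hm).div_const a))
    -- value of the formula at K is 0
    have hsqK : Real.sqrt K = a * |b| := by
      rw [hK, show a^2*b^2 = (a*|b|)^2 by rw [mul_pow, sq_abs]]
      exact Real.sqrt_sq (by positivity)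
    have hDK : (|b| + Real.sqrt K) ^ 2 - 4 * K / a = (|b| * (a - 1))^2 := by
      rw [hsqK, hK]
      have hb2 : |b|^2 = b^2 := sq_abs b
      field_simp
      nlinarith [hb2]
    have hK0 : Real.sign b *
        ((|b| - Real.sqrt K) + Real.sqrt ((|b| + Real.sqrt K) ^ 2 - 4 * K / a)) / 2 = 0 := by
      rw [hDK, Real.sqrt_sq (mul_nonneg (abs_nonneg b) (by linarith : (0:ℝ) ≤ a - 1)), hsqK]
      ring
    refine (hFc.continuousOn).congr ?_
    intro ρ hρ
    rw [hβhat]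
    by_cases h : ρ < K
    · rw [if_pos h, hF]
      simp only [min_eq_left h.le]
    · rw [if_neg h, hF]
      simp only [min_eq_right (not_lt.mp h)]
      exact hK0.symm
end

section
/- Let a > 0, ρ > 0, η ∈ (1,2], and b ≠ 0. The power-family penalized objective g(β) = (a/2)(β − b)² + ρ|β|^η is strictly convex on ℝ and has a unique global minimizer β*. Moreover β* ≠ 0, sgn(β*) = sgn(b), and β* satisfies the estimating equation a(β* − b) + ρη|β*|^{η−1}·sgn(β*) = 0; i.e., for η > 1 shrinkage occurs but no thresholding to zero. -/
open Set Filter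

private lemma pf_strict_quad (a b : ℝ) (ha : 0 < a) :
    StrictConvexOn ℝ Set.univ (fun β : ℝ => a / 2 * (β - b) ^ 2) := by
  have h1 : StrictConvexOn ℝ Set.univ (fun β : ℝ => (β - b) ^ 2) := by
    have h := (Even.strictConvexOn_pow (even_two) two_ne_zero).translate_right (-b)
    have : ((fun z => -b + z) ⁻¹' Set.univ : Set ℝ) = Set.univ := by simp
    rw [this] at h
    refine (h.congr fun z _ => ?_)
    simp [Function.comp, sub_eq_neg_add]
  refine ⟨convex_univ, fun x hx y hy hxy p q hp hq hpq => ?_⟩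
  have h2 := h1.2 hx hy hxy hp hq hpq
  have ha2 : (0:ℝ) < a / 2 := by positivity
  simp only [smul_eq_mul] at *
  nlinarith [h2]

private lemma pf_conv_pen (ρ η : ℝ) (hρ : 0 < ρ) (hη1 : 1 < η) :
    ConvexOn ℝ Set.univ (fun β : ℝ => ρ * |β| ^ η) := by
  have hrange : ((fun β : ℝ => |β|) '' Set.univ) = Set.Ici 0 := by
    rw [Set.image_univ]
    ext x
    simp only [Set.mem_range, Set.mem_Ici]
    constructor
    · rintro ⟨y, rfl⟩; exact abs_nonneg y
    · intro h; exact ⟨x, abs_of_nonneg h⟩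
  have habs : ConvexOn ℝ Set.univ (fun β : ℝ => |β|) := by
    have := convexOn_univ_norm (E := ℝ)
    exact this
  have hr : ConvexOn ℝ ((fun β : ℝ => |β|) '' Set.univ) (fun x : ℝ => x ^ η) := by
    rw [hrange]; exact convexOn_rpow hη1.le
  have hmono : MonotoneOn (fun x : ℝ => x ^ η) ((fun β : ℝ => |β|) '' Set.univ) := by
    rw [hrange]
    intro x hx y _ hxy
    exact Real.rpow_le_rpow hx hxy (by linarith)
  have hcomp : ConvexOn ℝ Set.univ ((fun x : ℝ => x ^ η) ∘ fun β : ℝ => |β|) :=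
    hr.comp habs hmono
  have := hcomp.smul hρ.le
  simpa [Function.comp, smul_eq_mul] using this

/-- For the power-family penalized objective
`g(β) = (a/2)(β − b)² + ρ|β|^η` with `a > 0`, `ρ > 0`, `η ∈ (1,2]` and `b ≠ 0`,
`g` is strictly convex and has a unique global minimizer `β*`; moreover `β* ≠ 0`,
`sgn(β*) = sgn(b)`, and `β*` solves `a(β* − b) + ρη|β*|^{η−1}·sgn(β*) = 0`. -/
theorem power_family_no_thresholding
    (a ρ η b : ℝ) (ha : 0 < a) (hρ : 0 < ρ) (hη1 : 1 < η) (hη2 : η ≤ 2) (hb : b ≠ 0)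
    (g : ℝ → ℝ)
    (hg : ∀ β : ℝ, g β = a / 2 * (β - b) ^ 2 + ρ * |β| ^ η) :
    StrictConvexOn ℝ Set.univ g ∧
    ∃ βs : ℝ,
      (∀ β : ℝ, β ≠ βs → g βs < g β) ∧
      βs ≠ 0 ∧
      Real.sign βs = Real.sign b ∧
      a * (βs - b) + ρ * η * |βs| ^ (η - 1) * Real.sign βs = 0 := by
  have hgfun : g = fun β : ℝ => a / 2 * (β - b) ^ 2 + ρ * |β| ^ η := funext hg
  -- strict convexity
  have hsc : StrictConvexOn ℝ Set.univ g := by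
    rw [hgfun]
    exact (pf_strict_quad a b ha).add_convexOn (pf_conv_pen ρ η hρ hη1)
  refine ⟨hsc, ?_⟩
  -- continuity
  have hcont : Continuous g := by
    rw [hgfun]
    exact (continuous_const.mul (((continuous_id.sub continuous_const).pow 2))).add
      (continuous_const.mul (continuous_abs.rpow_const fun x => Or.inr (by linarith)))
  -- coercivity
  have hpen_nonneg : ∀ β : ℝ, 0 ≤ ρ * |β| ^ η := fun β =>
    mul_nonneg hρ.le (Real.rpow_nonneg (abs_nonneg β) η)
  have hquad_le : ∀ β : ℝ, a / 2 * (β - b) ^ 2 ≤ g β := by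
    intro β; rw [hg]; nlinarith [hpen_nonneg β]
  have hcoer : Tendsto g (cocompact ℝ) atTop := by
    have hq : Tendsto (fun β : ℝ => a / 2 * (β - b) ^ 2) (cocompact ℝ) atTop := by
      rw [cocompact_eq_atBot_atTop]
      refine tendsto_sup.mpr ⟨?_, ?_⟩
      · have h1 : Tendsto (fun β : ℝ => b - β) atBot atTop := by
          have h0 : Tendsto (fun x : ℝ => -x) atBot atTop := tendsto_neg_atBot_atTop
          simpa [sub_eq_add_neg] using (tendsto_atTop_add_const_left atBot b h0)
        have h2 : Tendsto (fun β : ℝ => (β - b) ^ 2) atBot atTop := by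
          have := (tendsto_pow_atTop (n := 2) two_ne_zero).comp h1
          refine this.congr fun β => ?_
          simp [Function.comp]; ring
        exact h2.const_mul_atTop (by positivity)
      · have h1 : Tendsto (fun β : ℝ => β - b) atTop atTop :=
          tendsto_atTop_add_const_right atTop (-b) tendsto_id
        have h2 : Tendsto (fun β : ℝ => (β - b) ^ 2) atTop atTop :=
          (tendsto_pow_atTop (n := 2) two_ne_zero).comp h1
        exact h2.const_mul_atTop (by positivity)
    exact tendsto_atTop_mono hquad_le hq
  obtain ⟨βs, hβs⟩ := hcont.exists_forall_le hcoer
  -- strict minimality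
  have hmin : ∀ β : ℝ, β ≠ βs → g βs < g β := by
    intro β hne
    rcases lt_or_eq_of_le (hβs β) with h | h
    · exact h
    · exfalso
      have hmid := hsc.2 (Set.mem_univ β) (Set.mem_univ βs) hne
        (by norm_num : (0:ℝ) < 1/2) (by norm_num : (0:ℝ) < 1/2) (by norm_num)
      rw [← h] at hmid
      have hmlt : g ((1/2 : ℝ) • β + (1/2 : ℝ) • βs) < g βs := by
        simp only [smul_eq_mul] at hmid ⊢; linarith
      exact absurd (hβs ((1/2 : ℝ) • β + (1/2 : ℝ) • βs)) (not_le.mpr hmlt)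
  -- βs ≠ 0
  have hβs0 : βs ≠ 0 := by
    intro h0
    -- find small ε > 0 with g (ε * sign b) < g 0
    have hsgn : Real.sign b * b = |b| := by
      rcases lt_or_gt_of_ne hb with hneg | hpos
      · rw [Real.sign_of_neg hneg, abs_of_neg hneg]; ring
      · rw [Real.sign_of_pos hpos, abs_of_pos hpos]; ring
    have habs_b_pos : (0:ℝ) < |b| := abs_pos.mpr hb
    -- φ ε = a*ε/2 + ρ*ε^(η-1) is continuous at 0 with φ 0 = 0
    have hφ : ContinuousAt (fun ε : ℝ => a * ε / 2 + ρ * ε ^ (η - 1)) 0 := by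
      refine ContinuousAt.add (by fun_prop) ?_
      exact continuousAt_const.mul (Real.continuousAt_rpow_const 0 (η - 1) (Or.inr (by linarith)))
    have hφ0 : a * (0:ℝ) / 2 + ρ * (0:ℝ) ^ (η - 1) = 0 := by
      rw [Real.zero_rpow (by linarith : η - 1 ≠ 0)]; ring
    have hev : ∀ᶠ ε in nhds (0:ℝ), a * ε / 2 + ρ * ε ^ (η - 1) < a * |b| := by
      have : (fun ε : ℝ => a * ε / 2 + ρ * ε ^ (η - 1)) 0 < a * |b| := by
        show a * (0:ℝ) / 2 + ρ * (0:ℝ) ^ (η - 1) < a * |b|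
        rw [hφ0]; positivity
      exact hφ.eventually_lt continuousAt_const this
    obtain ⟨δ, hδpos, hδ⟩ := Metric.eventually_nhds_iff.mp hev
    set ε := δ / 2 with hε
    have hεpos : 0 < ε := by positivity
    have hεδ : dist ε (0:ℝ) < δ := by
      rw [Real.dist_eq, sub_zero, abs_of_pos hεpos]; linarith
    have hφε : a * ε / 2 + ρ * ε ^ (η - 1) < a * |b| := hδ hεδ
    -- compute g (ε * sign b) < g 0
    have hsb : |Real.sign b| = 1 := by
      rcases lt_or_gt_of_ne hb with hneg | hpos
      · rw [Real.sign_of_neg hneg]; norm_num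
      · rw [Real.sign_of_pos hpos]; norm_num
    have habs_eps : |ε * Real.sign b| = ε := by
      rw [abs_mul, hsb, mul_one, abs_of_pos hεpos]
    have hεη : ε ^ η = ε * ε ^ (η - 1) := by
      rw [show η = 1 + (η - 1) by ring, Real.rpow_add hεpos, Real.rpow_one]
      ring_nf
    have hsq : (Real.sign b) ^ 2 = 1 := by
      rcases lt_or_gt_of_ne hb with hneg | hpos
      · rw [Real.sign_of_neg hneg]; norm_num
      · rw [Real.sign_of_pos hpos]; norm_num
    have hglt : g (ε * Real.sign b) < g 0 := by
      rw [hg, hg, habs_eps, abs_zero]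
      rw [Real.zero_rpow (by linarith : η ≠ 0)]
      have hexp : (ε * Real.sign b - b) ^ 2 = ε ^ 2 - 2 * ε * |b| + b ^ 2 := by
        have : ε * Real.sign b * b = ε * |b| := by rw [mul_assoc, hsgn]
        nlinarith [hsq, this]
      rw [hexp, hεη]
      nlinarith [hφε, hεpos]
    have hne : ε * Real.sign b ≠ βs := by
      rw [h0]
      intro hc
      rcases mul_eq_zero.mp hc with h | h
      · exact absurd h (ne_of_gt hεpos)
      · exact hb (Real.sign_eq_zero_iff.mp h)
    have := hmin _ hne
    rw [h0] at this
    linarith [hglt]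
  -- sign βs = sign b
  have hprod : 0 < βs * b := by
    rcases lt_trichotomy (βs * b) 0 with hneg | hzero | hpos
    · exfalso
      have hne : -βs ≠ βs := by
        intro hc; apply hβs0; linarith
      have := hmin (-βs) hne
      rw [hg, hg] at this
      simp only [abs_neg] at this
      nlinarith
    · exact absurd hzero (mul_ne_zero hβs0 hb)
    · exact hpos
  have hsign : Real.sign βs = Real.sign b := by
    rcases lt_or_gt_of_ne hβs0 with hs | hs
    · have hbneg : b < 0 := by nlinarith
      rw [Real.sign_of_neg hs, Real.sign_of_neg hbneg]
    · have hbpos : 0 < b := by nlinarith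
      rw [Real.sign_of_pos hs, Real.sign_of_pos hbpos]
  -- stationarity
  have hderiv : HasDerivAt g (a * (βs - b) + ρ * (η * |βs| ^ (η - 2) * βs)) βs := by
    rw [hgfun]
    have h1 : HasDerivAt (fun β : ℝ => a / 2 * (β - b) ^ 2) (a * (βs - b)) βs := by
      have := (((hasDerivAt_id βs).sub_const b).pow 2).const_mul (a / 2)
      refine this.congr_deriv ?_
      simp only [id_eq]
      push_cast
      ring
    have h2 : HasDerivAt (fun β : ℝ => ρ * |β| ^ η) (ρ * (η * |βs| ^ (η - 2) * βs)) βs :=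
      (hasDerivAt_abs_rpow βs hη1).const_mul ρ
    exact h1.add h2
  have hlocmin : IsLocalMin g βs := Filter.Eventually.of_forall hβs
  have hzero := hlocmin.hasDerivAt_eq_zero hderiv
  have hkey : |βs| ^ (η - 2) * βs = |βs| ^ (η - 1) * Real.sign βs := by
    have habs : |βs| = βs * Real.sign βs := by
      rcases lt_or_gt_of_ne hβs0 with hs | hs
      · rw [Real.sign_of_neg hs, abs_of_neg hs]; ring
      · rw [Real.sign_of_pos hs, abs_of_pos hs]; ring
    have habspos : 0 < |βs| := abs_pos.mpr hβs0
    have h1 : |βs| ^ (η - 1) = |βs| ^ (η - 2) * |βs| := by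
      rw [show η - 1 = (η - 2) + 1 by ring, Real.rpow_add habspos, Real.rpow_one]
    have hsq : Real.sign βs * Real.sign βs = 1 := by
      rcases lt_or_gt_of_ne hβs0 with hs | hs
      · rw [Real.sign_of_neg hs]; norm_num
      · rw [Real.sign_of_pos hs]; norm_num
    have hx : |βs| * Real.sign βs = βs := by
      rw [habs, mul_assoc, hsq, mul_one]
    rw [h1]
    calc |βs| ^ (η - 2) * βs = |βs| ^ (η - 2) * (|βs| * Real.sign βs) := by rw [hx]
      _ = |βs| ^ (η - 2) * |βs| * Real.sign βs := by ring
  refine ⟨βs, hmin, hβs0, hsign, ?_⟩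
  calc a * (βs - b) + ρ * η * |βs| ^ (η - 1) * Real.sign βs
      = a * (βs - b) + ρ * (η * (|βs| ^ (η - 1) * Real.sign βs)) := by ring
    _ = a * (βs - b) + ρ * (η * (|βs| ^ (η - 2) * βs)) := by rw [hkey]
    _ = a * (βs - b) + ρ * (η * |βs| ^ (η - 2) * βs) := by ring
    _ = 0 := hzero
end

section
/- Consider binary logistic regression with data x_1,…,x_n ∈ ℝ^p, y_1,…,y_n ∈ {0,1}, n ≥ 1, and negative log-likelihood f(β) = Σ_{i=1}^n [ln(1 + exp(x_iᵗβ)) − y_i·x_iᵗβ]. Suppose the data are completely separated: there exists z ∈ ℝ^p such that x_iᵗz > 0 for all i with y_i = 1 and x_iᵗz < 0 for all i with y_i = 0. Then f(β) > 0 for every β ∈ ℝ^p, while f(tz) → 0 as t → ∞. Consequently inf_β f(β) = 0 and the infimum is not attained, i.e., the maximum likelihood estimator does not exist (the likelihood supremum occurs at infinity along direction z). -/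
open Filter Topology

/-- For binary logistic regression with negative log-likelihood
`f(β) = ∑ᵢ [ln(1 + exp(xᵢᵗβ)) − yᵢ·xᵢᵗβ]`, complete separation by some `z` implies
`f > 0` everywhere, `f(tz) → 0` as `t → ∞`, hence `inf f = 0` and the infimum is not
attained (the MLE does not exist). -/
theorem logistic_complete_separation
    {n p : ℕ} (hn : 0 < n)
    (x : Fin n → Fin p → ℝ) (y : Fin n → ℝ)
    (hy : ∀ i, y i = 0 ∨ y i = 1)
    (f : (Fin p → ℝ) → ℝ)
    (hf : ∀ β, f β =
      ∑ i, (Real.log (1 + Real.exp (∑ j, x i j * β j)) - y i * ∑ j, x i j * β j))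
    (z : Fin p → ℝ)
    (hsep : ∀ i, (y i = 1 → 0 < ∑ j, x i j * z j) ∧ (y i = 0 → ∑ j, x i j * z j < 0)) :
    (∀ β, 0 < f β) ∧
    Tendsto (fun t : ℝ => f (t • z)) atTop (𝓝 0) ∧
    (⨅ β : Fin p → ℝ, f β) = 0 ∧
    ¬ ∃ β : Fin p → ℝ, ∀ γ : Fin p → ℝ, f β ≤ f γ := by
  have hterm : ∀ (i : Fin n) (s : ℝ), y i = 0 ∨ y i = 1 →
      0 < Real.log (1 + Real.exp s) - y i * s := by
    intro i s h
    rcases h with h | h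
    · rw [h]
      simp only [zero_mul, sub_zero]
      have : (1 : ℝ) < 1 + Real.exp s := by linarith [Real.exp_pos s]
      exact Real.log_pos this
    · rw [h, one_mul, sub_pos]
      rw [Real.lt_log_iff_exp_lt (by positivity)]
      linarith [Real.exp_pos s]
  have hpos : ∀ β, 0 < f β := by
    intro β
    rw [hf]
    apply Finset.sum_pos
    · intro i _
      exact hterm i _ (hy i)
    · exact Finset.univ_nonempty_iff.mpr ⟨⟨0, hn⟩⟩
  -- sum along line
  have hsum : ∀ (i : Fin n) (t : ℝ), (∑ j, x i j * (t • z) j) = t * ∑ j, x i j * z j := by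
    intro i t
    rw [Finset.mul_sum]
    apply Finset.sum_congr rfl
    intro j _
    simp [Pi.smul_apply, smul_eq_mul]; ring
  have htend : Tendsto (fun t : ℝ => f (t • z)) atTop (𝓝 0) := by
    have : (fun t : ℝ => f (t • z)) =
        fun t => ∑ i, (Real.log (1 + Real.exp (t * ∑ j, x i j * z j))
          - y i * (t * ∑ j, x i j * z j)) := by
      funext t
      rw [hf]
      exact Finset.sum_congr rfl fun i _ => by rw [hsum]
    rw [this]
    have h0 : (0 : ℝ) = ∑ _i : Fin n, (0 : ℝ) := by simp
    rw [h0]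
    apply tendsto_finset_sum
    intro i _
    set s := ∑ j, x i j * z j with hs
    rcases hy i with h | h
    · -- y = 0, s < 0
      have hsneg : s < 0 := (hsep i).2 h
      simp only [h, zero_mul, sub_zero]
      have h1 : Tendsto (fun t : ℝ => t * s) atTop atBot :=
        tendsto_id.atTop_mul_const_of_neg hsneg
      have h2 : Tendsto (fun t : ℝ => 1 + Real.exp (t * s)) atTop (𝓝 1) := by
        have := (Real.tendsto_exp_atBot).comp h1
        have : Tendsto (fun t : ℝ => 1 + Real.exp (t * s)) atTop (𝓝 (1 + 0)) :=
          tendsto_const_nhds.add this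
        simpa using this
      have := (Real.continuousAt_log (by norm_num : (1:ℝ) ≠ 0)).tendsto.comp h2
      simpa [Function.comp_def] using this
    · -- y = 1, s > 0
      have hspos : 0 < s := (hsep i).1 h
      have hrw : ∀ t : ℝ, Real.log (1 + Real.exp (t * s)) - y i * (t * s)
          = Real.log (Real.exp (-(t * s)) + 1) := by
        intro t
        rw [h, one_mul]
        have : Real.exp (-(t * s)) + 1 = Real.exp (-(t * s)) * (1 + Real.exp (t * s)) := by
          rw [mul_add, mul_one, ← Real.exp_add, neg_add_cancel, Real.exp_zero]
        rw [this, Real.log_mul (Real.exp_ne_zero _) (by positivity), Real.log_exp]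
        ring
      simp only [hrw]
      have h1 : Tendsto (fun t : ℝ => -(t * s)) atTop atBot := by
        have : Tendsto (fun t : ℝ => t * s) atTop atTop :=
          tendsto_id.atTop_mul_const hspos
        exact tendsto_neg_atTop_atBot.comp this
      have h2 : Tendsto (fun t : ℝ => Real.exp (-(t * s)) + 1) atTop (𝓝 1) := by
        have := (Real.tendsto_exp_atBot).comp h1
        have : Tendsto (fun t : ℝ => Real.exp (-(t * s)) + 1) atTop (𝓝 (0 + 1)) :=
          this.add tendsto_const_nhds
        simpa using this
      have := (Real.continuousAt_log (by norm_num : (1:ℝ) ≠ 0)).tendsto.comp h2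
      simpa [Function.comp_def] using this
  have hbdd : BddBelow (Set.range f) := ⟨0, by rintro v ⟨β, rfl⟩; exact (hpos β).le⟩
  have hinf : (⨅ β : Fin p → ℝ, f β) = 0 := by
    apply le_antisymm
    · exact ge_of_tendsto htend (Filter.Eventually.of_forall fun t => ciInf_le hbdd _)
    · exact le_ciInf fun β => (hpos β).le
  refine ⟨hpos, htend, hinf, ?_⟩
  rintro ⟨β, hβ⟩
  have : f β ≤ 0 := ge_of_tendsto htend (Filter.Eventually.of_forall fun t => hβ _)
  exact absurd this (not_le.mpr (hpos β))
end

section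
/- Path-following ODE in ρ: Let A = {1,…,q} be partitioned into unpenalized indices S̄ and active penalized indices S_Z̄. Let f : ℝ^q → ℝ be twice continuously differentiable, let I ⊆ ℝ be an open interval, and let P : (0,∞) × I → ℝ have continuous second partial derivatives ∂²P/∂t² and ∂²P/∂t∂ρ. Define the stationarity map F : U × I → ℝ^q on U = {β ∈ ℝ^q : β_j ≠ 0 for all j ∈ S_Z̄} by F_j(β,ρ) = ∂_j f(β) + (∂P/∂t)(|β_j|, ρ)·sgn(β_j) for j ∈ S_Z̄ and F_j(β,ρ) = ∂_j f(β) for j ∈ S̄, and define H(β,ρ) ∈ ℝ^{q×q} by H_{jk}(β,ρ) = ∂²_{jk} f(β) + (∂²P/∂t²)(|β_j|,ρ)·1_{j=k, j∈S_Z̄}. Suppose F(β⁰, ρ₀) = 0 and H(β⁰, ρ₀) is positive definite. Then there exist ε > 0 and a continuously differentiable curve β : (ρ₀ − ε, ρ₀ + ε) → U with β(ρ₀) = β⁰, F(β(ρ), ρ) = 0 for all ρ, and derivative dβ/dρ(ρ) = −H(β(ρ),ρ)^{-1}·u(β(ρ),ρ), where u_j(β,ρ) = (∂²P/∂t∂ρ)(|β_j|,ρ)·sgn(β_j)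 for j ∈ S_Z̄ and u_j(β,ρ) = 0 for j ∈ S̄. -/
open Matrix

/-- Joint differentiability from continuous partial derivatives, on `Ioi 0 ×ˢ I`. -/
lemma hasFDerivAt_of_partials {g gt gρ : ℝ → ℝ → ℝ} {I : Set ℝ} (hI : IsOpen I)
    (hgt : ∀ r ∈ I, ∀ t : ℝ, 0 < t → HasDerivAt (fun s => g s r) (gt t r) t)
    (hgρ : ∀ t : ℝ, 0 < t → ∀ r ∈ I, HasDerivAt (fun r' => g t r') (gρ t r) r)
    (hgtC : ContinuousOn (fun z : ℝ × ℝ => gt z.1 z.2) (Set.Ioi 0 ×ˢ I))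
    (hgρC : ContinuousOn (fun z : ℝ × ℝ => gρ z.1 z.2) (Set.Ioi 0 ×ˢ I))
    {t₀ ρ₀ : ℝ} (ht₀ : 0 < t₀) (hρ₀ : ρ₀ ∈ I) :
    HasFDerivAt (fun z : ℝ × ℝ => g z.1 z.2)
      (gt t₀ ρ₀ • (ContinuousLinearMap.fst ℝ ℝ ℝ) + gρ t₀ ρ₀ • (ContinuousLinearMap.snd ℝ ℝ ℝ))
      (t₀, ρ₀) := by
  have hopen : IsOpen (Set.Ioi (0:ℝ) ×ˢ I) := isOpen_Ioi.prod hI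
  have hmem : ((t₀, ρ₀) : ℝ × ℝ) ∈ Set.Ioi (0:ℝ) ×ˢ I := ⟨ht₀, hρ₀⟩
  rw [hasFDerivAt_iff_isLittleO_nhds_zero]
  rw [Asymptotics.isLittleO_iff]
  intro c hc
  have hc2 : (0:ℝ) < c / 2 := by linarith
  -- continuity at the base point
  have hgtA : ContinuousAt (fun z : ℝ × ℝ => gt z.1 z.2) (t₀, ρ₀) :=
    (hgtC (t₀, ρ₀) hmem).continuousAt (hopen.mem_nhds hmem)
  have hgρA : ContinuousAt (fun z : ℝ × ℝ => gρ z.1 z.2) (t₀, ρ₀) :=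
    (hgρC (t₀, ρ₀) hmem).continuousAt (hopen.mem_nhds hmem)
  have h1 : ∀ᶠ z : ℝ × ℝ in nhds (t₀, ρ₀), |gt z.1 z.2 - gt t₀ ρ₀| ≤ c / 2 := by
    have := hgtA.eventually (Metric.ball_mem_nhds (gt t₀ ρ₀) hc2)
    filter_upwards [this] with z hz
    rw [Real.dist_eq] at hz; exact hz.le
  have h2 : ∀ᶠ z : ℝ × ℝ in nhds (t₀, ρ₀), |gρ z.1 z.2 - gρ t₀ ρ₀| ≤ c / 2 := by
    have := hgρA.eventually (Metric.ball_mem_nhds (gρ t₀ ρ₀) hc2)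
    filter_upwards [this] with z hz
    rw [Real.dist_eq] at hz; exact hz.le
  obtain ⟨δ, hδpos, hδ⟩ := Metric.eventually_nhds_iff_ball.1
    ((h1.and h2).and (hopen.eventually_mem hmem))
  have hδ' : ∀ z : ℝ × ℝ, dist z (t₀, ρ₀) < δ →
      (|gt z.1 z.2 - gt t₀ ρ₀| ≤ c / 2 ∧ |gρ z.1 z.2 - gρ t₀ ρ₀| ≤ c / 2)
        ∧ z ∈ Set.Ioi (0:ℝ) ×ˢ I := fun z hz => hδ z (Metric.mem_ball.2 hz)
  rw [Filter.eventually_iff_exists_mem]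
  refine ⟨Metric.ball 0 δ, Metric.ball_mem_nhds _ hδpos, ?_⟩
  rintro ⟨a, b⟩ hab
  -- z = (t₀ + a, ρ₀ + b)
  have hab' : dist ((t₀ + a, ρ₀ + b) : ℝ × ℝ) (t₀, ρ₀) < δ := by
    rw [Prod.dist_eq]
    rw [Metric.mem_ball, Prod.dist_eq] at hab
    simpa [Real.dist_eq, abs_sub_comm] using hab
  have habn : max |a| |b| < δ := by
    rw [Prod.dist_eq, Real.dist_eq, Real.dist_eq] at hab'
    simpa using hab'
  have hanorm : |a| ≤ ‖((a,b) : ℝ × ℝ)‖ := le_max_left _ _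
  have hbnorm : |b| ≤ ‖((a,b) : ℝ × ℝ)‖ := le_max_right _ _
  -- membership of intermediate points
  have hmem1 : ∀ ζ ∈ Set.uIcc t₀ (t₀ + a), dist ((ζ, ρ₀ + b) : ℝ × ℝ) (t₀, ρ₀) < δ := by
    intro ζ hζ
    rw [Prod.dist_eq, Real.dist_eq, Real.dist_eq]
    have : |ζ - t₀| ≤ |a| := by
      rw [Set.uIcc_eq_union] at hζ
      rcases hζ with h | h <;> rw [Set.mem_Icc] at h <;>
        · rw [abs_le]; constructor <;> cases abs_le.1 (le_refl |a|) <;> [skip; skip] <;> nlinarith [neg_abs_le a, le_abs_self a]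
    calc max |ζ - t₀| |ρ₀ + b - ρ₀| ≤ max |a| |b| := by
          apply max_le_max this; simp
      _ < δ := habn
  have hmem2 : ∀ ζ ∈ Set.uIcc ρ₀ (ρ₀ + b), dist ((t₀, ζ) : ℝ × ℝ) (t₀, ρ₀) < δ := by
    intro ζ hζ
    rw [Prod.dist_eq, Real.dist_eq, Real.dist_eq]
    have : |ζ - ρ₀| ≤ |b| := by
      rw [Set.uIcc_eq_union] at hζ
      rcases hζ with h | h <;> rw [Set.mem_Icc] at h <;>
        · rw [abs_le]; constructor <;> nlinarith [neg_abs_le b, le_abs_self b]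
    calc max |t₀ - t₀| |ζ - ρ₀| ≤ max |a| |b| := by
          apply max_le_max; simp; exact this
      _ < δ := habn
  -- Term 1: |g (t₀+a) (ρ₀+b) - g t₀ (ρ₀+b) - gt t₀ ρ₀ * a| ≤ c/2 * |a|
  have key1 : |g (t₀+a) (ρ₀+b) - g t₀ (ρ₀+b) - gt t₀ ρ₀ * a| ≤ c/2 * |a| := by
    have hconv : Convex ℝ (Set.uIcc t₀ (t₀ + a)) := convex_uIcc _ _
    have hder : ∀ ζ ∈ Set.uIcc t₀ (t₀ + a),
        HasDerivWithinAt (fun s => g s (ρ₀ + b) - gt t₀ ρ₀ * s)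
          (gt ζ (ρ₀ + b) - gt t₀ ρ₀) (Set.uIcc t₀ (t₀ + a)) ζ := by
      intro ζ hζ
      have hz := hδ' _ (hmem1 ζ hζ)
      have h' := ((hgt (ρ₀ + b) hz.2.2 ζ hz.2.1).sub
        ((hasDerivAt_id ζ).const_mul (gt t₀ ρ₀))).hasDerivWithinAt
        (s := Set.uIcc t₀ (t₀ + a))
      simp only [mul_one] at h'; exact h'
    have hbound : ∀ ζ ∈ Set.uIcc t₀ (t₀ + a),
        ‖gt ζ (ρ₀ + b) - gt t₀ ρ₀‖ ≤ c / 2 := by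
      intro ζ hζ
      exact (hδ' _ (hmem1 ζ hζ)).1.1
    have := hconv.norm_image_sub_le_of_norm_hasDerivWithin_le hder hbound
      Set.left_mem_uIcc Set.right_mem_uIcc
    rw [Real.norm_eq_abs, Real.norm_eq_abs] at this
    calc |g (t₀+a) (ρ₀+b) - g t₀ (ρ₀+b) - gt t₀ ρ₀ * a|
        = |(g (t₀+a) (ρ₀+b) - gt t₀ ρ₀ * (t₀+a)) - (g t₀ (ρ₀+b) - gt t₀ ρ₀ * t₀)| := by
          ring_nf
      _ ≤ c/2 * |t₀ + a - t₀| := this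
      _ = c/2 * |a| := by ring_nf
  -- Term 2
  have key2 : |g t₀ (ρ₀+b) - g t₀ ρ₀ - gρ t₀ ρ₀ * b| ≤ c/2 * |b| := by
    have hconv : Convex ℝ (Set.uIcc ρ₀ (ρ₀ + b)) := convex_uIcc _ _
    have hder : ∀ ζ ∈ Set.uIcc ρ₀ (ρ₀ + b),
        HasDerivWithinAt (fun r => g t₀ r - gρ t₀ ρ₀ * r)
          (gρ t₀ ζ - gρ t₀ ρ₀) (Set.uIcc ρ₀ (ρ₀ + b)) ζ := by
      intro ζ hζ
      have hz := hδ' _ (hmem2 ζ hζ)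
      have h' := ((hgρ t₀ hz.2.1 ζ hz.2.2).sub
        ((hasDerivAt_id ζ).const_mul (gρ t₀ ρ₀))).hasDerivWithinAt
        (s := Set.uIcc ρ₀ (ρ₀ + b))
      simp only [mul_one] at h'; exact h'
    have hbound : ∀ ζ ∈ Set.uIcc ρ₀ (ρ₀ + b),
        ‖gρ t₀ ζ - gρ t₀ ρ₀‖ ≤ c / 2 := by
      intro ζ hζ
      exact (hδ' _ (hmem2 ζ hζ)).1.2
    have := hconv.norm_image_sub_le_of_norm_hasDerivWithin_le hder hbound
      Set.left_mem_uIcc Set.right_mem_uIcc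
    rw [Real.norm_eq_abs, Real.norm_eq_abs] at this
    calc |g t₀ (ρ₀+b) - g t₀ ρ₀ - gρ t₀ ρ₀ * b|
        = |(g t₀ (ρ₀+b) - gρ t₀ ρ₀ * (ρ₀+b)) - (g t₀ ρ₀ - gρ t₀ ρ₀ * ρ₀)| := by
          ring_nf
      _ ≤ c/2 * |ρ₀ + b - ρ₀| := this
      _ = c/2 * |b| := by ring_nf
  -- combine
  have hL : ((gt t₀ ρ₀ • (ContinuousLinearMap.fst ℝ ℝ ℝ) +
      gρ t₀ ρ₀ • (ContinuousLinearMap.snd ℝ ℝ ℝ)) ((a,b) : ℝ × ℝ)) =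
      gt t₀ ρ₀ * a + gρ t₀ ρ₀ * b := by
    simp [ContinuousLinearMap.smul_apply]
  rw [Real.norm_eq_abs]
  simp only [hL]
  calc |g (t₀+a) (ρ₀+b) - g t₀ ρ₀ - (gt t₀ ρ₀ * a + gρ t₀ ρ₀ * b)|
      ≤ |g (t₀+a) (ρ₀+b) - g t₀ (ρ₀+b) - gt t₀ ρ₀ * a|
        + |g t₀ (ρ₀+b) - g t₀ ρ₀ - gρ t₀ ρ₀ * b| := by
        rw [show g (t₀+a) (ρ₀+b) - g t₀ ρ₀ - (gt t₀ ρ₀ * a + gρ t₀ ρ₀ * b)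
          = (g (t₀+a) (ρ₀+b) - g t₀ (ρ₀+b) - gt t₀ ρ₀ * a)
            + (g t₀ (ρ₀+b) - g t₀ ρ₀ - gρ t₀ ρ₀ * b) by ring]
        exact abs_add_le _ _
    _ ≤ c/2 * |a| + c/2 * |b| := add_le_add key1 key2
    _ ≤ c/2 * ‖((a,b) : ℝ × ℝ)‖ + c/2 * ‖((a,b) : ℝ × ℝ)‖ := by
        gcongr
    _ = c * ‖((a,b) : ℝ × ℝ)‖ := by ring

/-- The linear map `(b, r) ↦ (M *ᵥ b + r • w, r)`. -/
def pathLM {q : ℕ} (M : Matrix (Fin q) (Fin q) ℝ) (w : Fin q → ℝ) :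
    ((Fin q → ℝ) × ℝ) →ₗ[ℝ] ((Fin q → ℝ) × ℝ) where
  toFun p := (M *ᵥ p.1 + p.2 • w, p.2)
  map_add' p r := by
    refine Prod.ext ?_ rfl
    simp only [Prod.fst_add, Prod.snd_add, Matrix.mulVec_add, add_smul]
    abel
  map_smul' c p := by
    refine Prod.ext ?_ rfl
    simp only [Prod.smul_fst, Prod.smul_snd, Matrix.mulVec_smul, smul_eq_mul,
      RingHom.id_apply, Prod.smul_mk, smul_add, smul_smul]

/-- The continuous linear map `(b, r) ↦ (M *ᵥ b + r • w, r)`. -/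
noncomputable def pathToL {q : ℕ} (M : Matrix (Fin q) (Fin q) ℝ) (w : Fin q → ℝ) :
    ((Fin q → ℝ) × ℝ) →L[ℝ] ((Fin q → ℝ) × ℝ) :=
  LinearMap.toContinuousLinearMap (pathLM M w)

@[simp] lemma pathToL_apply {q : ℕ} (M : Matrix (Fin q) (Fin q) ℝ) (w : Fin q → ℝ)
    (p : (Fin q → ℝ) × ℝ) : pathToL M w p = (M *ᵥ p.1 + p.2 • w, p.2) := rfl

/-- The linear part of `(M, w) ↦ pathToL M w`. -/
noncomputable def pathT (q : ℕ) : (Matrix (Fin q) (Fin q) ℝ × (Fin q → ℝ)) →ₗ[ℝ]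
    (((Fin q → ℝ) × ℝ) →L[ℝ] ((Fin q → ℝ) × ℝ)) where
  toFun Mw := LinearMap.toContinuousLinearMap
    { toFun := fun p => (Mw.1 *ᵥ p.1 + p.2 • Mw.2, 0)
      map_add' := fun p r => by
        refine Prod.ext ?_ (by simp)
        simp only [Prod.fst_add, Prod.snd_add, Matrix.mulVec_add, add_smul]
        abel
      map_smul' := fun c p => by
        refine Prod.ext ?_ (by simp)
        simp only [Prod.smul_fst, Prod.smul_snd, Matrix.mulVec_smul, smul_eq_mul,
          RingHom.id_apply, Prod.smul_mk, smul_add, smul_smul] }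
  map_add' Mw Nw := by
    apply ContinuousLinearMap.ext
    intro p
    refine Prod.ext ?_ (by simp)
    show (Mw.1 + Nw.1) *ᵥ p.1 + p.2 • (Mw.2 + Nw.2)
      = (Mw.1 *ᵥ p.1 + p.2 • Mw.2) + (Nw.1 *ᵥ p.1 + p.2 • Nw.2)
    simp only [Matrix.add_mulVec, smul_add]
    abel
  map_smul' c Mw := by
    apply ContinuousLinearMap.ext
    intro p
    refine Prod.ext ?_ (by simp)
    show (c • Mw.1) *ᵥ p.1 + p.2 • (c • Mw.2) = c • (Mw.1 *ᵥ p.1 + p.2 • Mw.2)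
    simp only [Matrix.smul_mulVec, smul_add, smul_comm p.2 c]

lemma pathToL_eq {q : ℕ} (M : Matrix (Fin q) (Fin q) ℝ) (w : Fin q → ℝ) :
    pathToL M w = pathT q (M, w) +
      ((0 : ((Fin q → ℝ) × ℝ) →L[ℝ] (Fin q → ℝ)).prod
        (ContinuousLinearMap.snd ℝ (Fin q → ℝ) ℝ)) := by
  apply ContinuousLinearMap.ext
  intro p
  refine Prod.ext ?_ ?_ <;>
    simp [pathToL, pathLM, pathT, ContinuousLinearMap.prod_apply]

/-- The continuous linear equivalence `(b, r) ↦ (M *ᵥ b + r • w, r)` when `M` is invertible. -/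
noncomputable def pathCLE {q : ℕ} (M : Matrix (Fin q) (Fin q) ℝ) (w : Fin q → ℝ) (hM : IsUnit M.det) :
    ((Fin q → ℝ) × ℝ) ≃L[ℝ] ((Fin q → ℝ) × ℝ) :=
  LinearEquiv.toContinuousLinearEquiv
    (LinearEquiv.ofLinear (pathLM M w) (pathLM M⁻¹ (-(M⁻¹ *ᵥ w)))
      (by
        apply LinearMap.ext
        intro p
        refine Prod.ext ?_ rfl
        show M *ᵥ (M⁻¹ *ᵥ p.1 + p.2 • (-(M⁻¹ *ᵥ w))) + p.2 • w = p.1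
        simp only [Matrix.mulVec_add, Matrix.mulVec_smul, Matrix.mulVec_neg,
          Matrix.mulVec_mulVec, Matrix.mul_nonsing_inv M hM, Matrix.one_mulVec, smul_neg]
        abel)
      (by
        apply LinearMap.ext
        intro p
        refine Prod.ext ?_ rfl
        show M⁻¹ *ᵥ (M *ᵥ p.1 + p.2 • w) + p.2 • (-(M⁻¹ *ᵥ w)) = p.1
        simp only [Matrix.mulVec_add, Matrix.mulVec_smul, Matrix.mulVec_mulVec,
          Matrix.nonsing_inv_mul M hM, Matrix.one_mulVec, smul_neg]
        abel))

@[simp] lemma pathCLE_coe {q : ℕ} (M : Matrix (Fin q) (Fin q) ℝ) (w : Fin q → ℝ)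
    (hM : IsUnit M.det) :
    (pathCLE M w hM : ((Fin q → ℝ) × ℝ) →L[ℝ] ((Fin q → ℝ) × ℝ)) = pathToL M w := by
  apply ContinuousLinearMap.ext
  intro p
  rfl

@[simp] lemma pathCLE_symm_apply {q : ℕ} (M : Matrix (Fin q) (Fin q) ℝ) (w : Fin q → ℝ)
    (hM : IsUnit M.det) (p : (Fin q → ℝ) × ℝ) :
    (pathCLE M w hM).symm p = (M⁻¹ *ᵥ p.1 + p.2 • (-(M⁻¹ *ᵥ w)), p.2) := rfl

/-- coordinate projection as a CLM on `Fin q → ℝ`. -/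
noncomputable def projCLM {q : ℕ} (j : Fin q) : (Fin q → ℝ) →L[ℝ] ℝ :=
  ContinuousLinearMap.proj j

@[simp] lemma projCLM_apply {q : ℕ} (j : Fin q) (v : Fin q → ℝ) : projCLM j v = v j := rfl

set_option maxHeartbeats 2000000

/-- Path-following ODE in ρ: For a twice continuously differentiable
loss `f`, a penalty `P(t,ρ)` with continuous second partials `∂²P/∂t²` and `∂²P/∂t∂ρ`,
and the stationarity map `F(β,ρ)_j = ∂_j f(β) + ∂P/∂t(|β_j|,ρ)·sgn(β_j)` on active
penalized coordinates `j ∈ SZ` (and `F(β,ρ)_j = ∂_j f(β)` on unpenalized coordinates),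
if `F(β⁰,ρ₀) = 0` and the restricted Hessian `H(β⁰,ρ₀)` is positive definite, then
there is a continuously differentiable local solution curve `β(ρ)` with `β(ρ₀) = β⁰`,
`F(β(ρ),ρ) = 0`, and `dβ/dρ = −H(β(ρ),ρ)⁻¹·u(β(ρ),ρ)` where
`u_j = ∂²P/∂t∂ρ(|β_j|,ρ)·sgn(β_j)` for `j ∈ SZ` and `u_j = 0` otherwise. -/
theorem path_following_ode_in_rho
    {q : ℕ} (SZ : Finset (Fin q))
    (f : (Fin q → ℝ) → ℝ) (hf : ContDiff ℝ 2 f)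
    (I : Set ℝ) (hI : IsOpen I) (hIconn : I.OrdConnected)
    (P Pt Ptt Ptρ : ℝ → ℝ → ℝ)
    (hPt : ∀ ρ ∈ I, ∀ t : ℝ, 0 < t → HasDerivAt (fun s => P s ρ) (Pt t ρ) t)
    (hPtt : ∀ ρ ∈ I, ∀ t : ℝ, 0 < t → HasDerivAt (fun s => Pt s ρ) (Ptt t ρ) t)
    (hPtρ : ∀ t : ℝ, 0 < t → ∀ ρ ∈ I, HasDerivAt (fun r => Pt t r) (Ptρ t ρ) ρ)
    (hPttCont : ContinuousOn (fun z : ℝ × ℝ => Ptt z.1 z.2) (Set.Ioi 0 ×ˢ I))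
    (hPtρCont : ContinuousOn (fun z : ℝ × ℝ => Ptρ z.1 z.2) (Set.Ioi 0 ×ˢ I))
    (F : (Fin q → ℝ) → ℝ → Fin q → ℝ)
    (hF : ∀ β ρ j, F β ρ j =
      fderiv ℝ f β (Pi.single j 1) +
        (if j ∈ SZ then Pt |β j| ρ * Real.sign (β j) else 0))
    (H : (Fin q → ℝ) → ℝ → Matrix (Fin q) (Fin q) ℝ)
    (hH : ∀ β ρ j k, H β ρ j k =
      fderiv ℝ (fun b => fderiv ℝ f b (Pi.single k 1)) β (Pi.single j 1) +
        (if j = k ∧ j ∈ SZ then Ptt |β j| ρ else 0))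
    (u : (Fin q → ℝ) → ℝ → Fin q → ℝ)
    (hu : ∀ β ρ j, u β ρ j =
      if j ∈ SZ then Ptρ |β j| ρ * Real.sign (β j) else 0)
    (ρ₀ : ℝ) (hρ₀ : ρ₀ ∈ I)
    (β₀ : Fin q → ℝ) (hβ₀ : ∀ j ∈ SZ, β₀ j ≠ 0)
    (hstat : F β₀ ρ₀ = 0)
    (hpd : (H β₀ ρ₀).PosDef) :
    ∃ ε > 0, ∃ βc : ℝ → Fin q → ℝ,
      βc ρ₀ = β₀ ∧
      ContDiffOn ℝ 1 βc (Set.Ioo (ρ₀ - ε) (ρ₀ + ε)) ∧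
      ∀ ρ ∈ Set.Ioo (ρ₀ - ε) (ρ₀ + ε),
        (∀ j ∈ SZ, βc ρ j ≠ 0) ∧
        F (βc ρ) ρ = 0 ∧
        HasDerivAt βc (-((H (βc ρ) ρ)⁻¹ *ᵥ u (βc ρ) ρ)) ρ := by
  classical
  -- basic differentiability facts about f
  have hfdiff : Differentiable ℝ f := hf.differentiable (by norm_num)
  have hf'cd : ContDiff ℝ 1 (fderiv ℝ f) := hf.fderiv_right (by norm_num)
  have hf'diff : Differentiable ℝ (fderiv ℝ f) := hf'cd.differentiable (by norm_num)
  have hf''cont : Continuous (fderiv ℝ (fderiv ℝ f)) := hf'cd.continuous_fderiv (by norm_num)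
  -- symmetry of the second derivative
  have hsymm : ∀ (β : Fin q → ℝ) (v w : Fin q → ℝ),
      fderiv ℝ (fderiv ℝ f) β v w = fderiv ℝ (fderiv ℝ f) β w v := fun β v w =>
    second_derivative_symmetric_of_eventually_of_real
      (Filter.Eventually.of_forall fun y => (hfdiff y).hasFDerivAt)
      ((hf'diff β).hasFDerivAt) v w
  -- derivative of coordinates of the gradient
  have hfderiv_coord : ∀ (k : Fin q) (β : Fin q → ℝ),
      HasFDerivAt (fun b => fderiv ℝ f b (Pi.single k 1))
        ((ContinuousLinearMap.apply ℝ ℝ (Pi.single k (1:ℝ))).comp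
          (fderiv ℝ (fderiv ℝ f) β)) β := by
    intro k β
    have := (ContinuousLinearMap.apply ℝ ℝ (Pi.single k (1:ℝ))).hasFDerivAt.comp β
      (hf'diff β).hasFDerivAt
    exact this
  have hHf : ∀ (β : Fin q → ℝ) (j k : Fin q),
      fderiv ℝ (fun b => fderiv ℝ f b (Pi.single k 1)) β (Pi.single j 1)
        = fderiv ℝ (fderiv ℝ f) β (Pi.single j 1) (Pi.single k 1) := by
    intro β j k
    rw [(hfderiv_coord k β).fderiv]
    rfl
  -- expansion of the second derivative along coordinates
  have hexp : ∀ (β b : Fin q → ℝ) (j : Fin q),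
      fderiv ℝ (fderiv ℝ f) β b (Pi.single j 1)
        = ∑ k, fderiv ℝ (fderiv ℝ f) β (Pi.single j 1) (Pi.single k 1) * b k := by
    intro β b j
    have hb : b = ∑ k, b k • (Pi.single k 1 : Fin q → ℝ) := by
      funext i
      simp [Finset.sum_apply, Pi.single_apply]
    calc fderiv ℝ (fderiv ℝ f) β b (Pi.single j 1)
        = ∑ k, b k * fderiv ℝ (fderiv ℝ f) β (Pi.single k 1) (Pi.single j 1) := by
          conv_lhs => rw [hb]
          rw [map_sum, ContinuousLinearMap.sum_apply]
          refine Finset.sum_congr rfl fun k _ => ?_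
          rw [_root_.map_smul, ContinuousLinearMap.smul_apply, smul_eq_mul]
      _ = ∑ k, fderiv ℝ (fderiv ℝ f) β (Pi.single j 1) (Pi.single k 1) * b k :=
          Finset.sum_congr rfl fun k _ => by rw [hsymm, mul_comm]
  -- the open set of admissible points
  set GS : Set ((Fin q → ℝ) × ℝ) := {z | (∀ j ∈ SZ, z.1 j ≠ 0) ∧ z.2 ∈ I} with hGSdef
  have hGSopen : IsOpen GS := by
    have h1 : GS = (⋂ j ∈ SZ, {z : (Fin q → ℝ) × ℝ | z.1 j ≠ 0}) ∩ {z | z.2 ∈ I} := by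
      ext z
      simp [hGSdef, Set.mem_iInter]
    rw [h1]
    refine IsOpen.inter ?_ (hI.preimage continuous_snd)
    refine isOpen_biInter_finset fun j _ => ?_
    have hc : Continuous fun z : (Fin q → ℝ) × ℝ => z.1 j :=
      (continuous_apply j).comp continuous_fst
    exact isOpen_ne.preimage hc
  -- the map Φ
  set Φ : (Fin q → ℝ) × ℝ → (Fin q → ℝ) × ℝ := fun z => (F z.1 z.2, z.2) with hΦdef
  -- derivative of Φ at points of GS
  have hΦderiv : ∀ z ∈ GS, HasFDerivAt Φ (pathToL (H z.1 z.2) (u z.1 z.2)) z := by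
    rintro ⟨β, ρ⟩ hz
    obtain ⟨hzU, hzI⟩ := hz
    have hcomp : ∀ j : Fin q, HasFDerivAt (fun z : (Fin q → ℝ) × ℝ => F z.1 z.2 j)
        (((projCLM j).comp
          ((ContinuousLinearMap.fst ℝ (Fin q → ℝ) ℝ).comp (pathToL (H β ρ) (u β ρ))))) (β, ρ) := by
      intro j
      -- first part : the gradient coordinate
      have h1 : HasFDerivAt (fun z : (Fin q → ℝ) × ℝ => fderiv ℝ f z.1 (Pi.single j 1))
          (((ContinuousLinearMap.apply ℝ ℝ (Pi.single j (1:ℝ))).comp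
            (fderiv ℝ (fderiv ℝ f) β)).comp
              (ContinuousLinearMap.fst ℝ (Fin q → ℝ) ℝ)) (β, ρ) :=
        by have := (hfderiv_coord j β).comp (β, ρ)
             (hasFDerivAt_fst (𝕜 := ℝ) (E := Fin q → ℝ) (F := ℝ) (p := ((β, ρ) : (Fin q → ℝ) × ℝ))); exact this
      by_cases hj : j ∈ SZ
      · -- penalized coordinate
        have hne : β j ≠ 0 := hzU j hj
        set s : ℝ := Real.sign (β j) with hsdef
        have hs_cases : (β j < 0 ∧ s = -1) ∨ (0 < β j ∧ s = 1) := by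
          rcases hne.lt_or_gt with h | h
          · exact Or.inl ⟨h, by rw [hsdef, Real.sign_of_neg h]⟩
          · exact Or.inr ⟨h, by rw [hsdef, Real.sign_of_pos h]⟩
        have hs2 : s * s = 1 := by rcases hs_cases with ⟨_, h⟩ | ⟨_, h⟩ <;> rw [h] <;> norm_num
        have hsx : s * β j = |β j| := by
          rcases hs_cases with ⟨h, hs⟩ | ⟨h, hs⟩
          · rw [hs, abs_of_neg h]; ring
          · rw [hs, abs_of_pos h]; ring
        have hpos : 0 < |β j| := abs_pos.2 hne
        -- derivative of (t, r) ↦ Pt t r at (|β j|, ρ)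
        have hPt2 : HasFDerivAt (fun w : ℝ × ℝ => Pt w.1 w.2)
            (Ptt |β j| ρ • (ContinuousLinearMap.fst ℝ ℝ ℝ)
              + Ptρ |β j| ρ • (ContinuousLinearMap.snd ℝ ℝ ℝ)) (|β j|, ρ) :=
          hasFDerivAt_of_partials hI hPtt hPtρ hPttCont hPtρCont hpos hzI
        -- inner map z ↦ (s * z.1 j, z.2)
        have hm : HasFDerivAt (fun z : (Fin q → ℝ) × ℝ => (s * z.1 j, z.2))
            ((s • ((projCLM j).comp
              (ContinuousLinearMap.fst ℝ (Fin q → ℝ) ℝ))).prod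
                (ContinuousLinearMap.snd ℝ (Fin q → ℝ) ℝ)) (β, ρ) := by
          refine HasFDerivAt.prodMk ?_ hasFDerivAt_snd
          have hb : HasFDerivAt (fun z : (Fin q → ℝ) × ℝ => z.1 j)
              ((projCLM j).comp
                (ContinuousLinearMap.fst ℝ (Fin q → ℝ) ℝ)) (β, ρ) :=
            ((projCLM j).comp
              (ContinuousLinearMap.fst ℝ (Fin q → ℝ) ℝ)).hasFDerivAt
          exact hb.const_mul s
        have hPt2' : HasFDerivAt (fun w : ℝ × ℝ => Pt w.1 w.2)
            (Ptt |β j| ρ • (ContinuousLinearMap.fst ℝ ℝ ℝ)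
              + Ptρ |β j| ρ • (ContinuousLinearMap.snd ℝ ℝ ℝ)) (s * β j, ρ) := by
          rwa [hsx]
        have hcomp2 : HasFDerivAt (fun z : (Fin q → ℝ) × ℝ => Pt (s * z.1 j) z.2)
            ((Ptt |β j| ρ • (ContinuousLinearMap.fst ℝ ℝ ℝ)
              + Ptρ |β j| ρ • (ContinuousLinearMap.snd ℝ ℝ ℝ)).comp
                ((s • ((projCLM j).comp
                  (ContinuousLinearMap.fst ℝ (Fin q → ℝ) ℝ))).prod
                    (ContinuousLinearMap.snd ℝ (Fin q → ℝ) ℝ))) (β, ρ) := by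
          have := hPt2'.comp (β, ρ) hm
          exact this
        have hmul : HasFDerivAt (fun z : (Fin q → ℝ) × ℝ => Pt (s * z.1 j) z.2 * s)
            (s • ((Ptt |β j| ρ • (ContinuousLinearMap.fst ℝ ℝ ℝ)
              + Ptρ |β j| ρ • (ContinuousLinearMap.snd ℝ ℝ ℝ)).comp
                ((s • ((projCLM j).comp
                  (ContinuousLinearMap.fst ℝ (Fin q → ℝ) ℝ))).prod
                    (ContinuousLinearMap.snd ℝ (Fin q → ℝ) ℝ)))) (β, ρ) :=
          hcomp2.mul_const s
        -- local equality of the penalty term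
        have heq : (fun z : (Fin q → ℝ) × ℝ => Pt |z.1 j| z.2 * Real.sign (z.1 j))
            =ᶠ[nhds ((β, ρ) : (Fin q → ℝ) × ℝ)]
              fun z => Pt (s * z.1 j) z.2 * s := by
          have hc : Continuous fun z : (Fin q → ℝ) × ℝ => z.1 j :=
            (continuous_apply j).comp continuous_fst
          rcases hs_cases with ⟨h, hs⟩ | ⟨h, hs⟩
          · have hev : ∀ᶠ z : (Fin q → ℝ) × ℝ in nhds (β, ρ), z.1 j < 0 :=
              hc.continuousAt.eventually_lt continuousAt_const h
            filter_upwards [hev] with z hz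
            rw [Real.sign_of_neg hz, hs, abs_of_neg hz]
            ring_nf
          · have hev : ∀ᶠ z : (Fin q → ℝ) × ℝ in nhds (β, ρ), 0 < z.1 j :=
              continuousAt_const.eventually_lt hc.continuousAt h
            filter_upwards [hev] with z hz
            rw [Real.sign_of_pos hz, hs, abs_of_pos hz]
            ring_nf
        have hpen : HasFDerivAt (fun z : (Fin q → ℝ) × ℝ => Pt |z.1 j| z.2 * Real.sign (z.1 j))
            (s • ((Ptt |β j| ρ • (ContinuousLinearMap.fst ℝ ℝ ℝ)
              + Ptρ |β j| ρ • (ContinuousLinearMap.snd ℝ ℝ ℝ)).comp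
                ((s • ((projCLM j).comp
                  (ContinuousLinearMap.fst ℝ (Fin q → ℝ) ℝ))).prod
                    (ContinuousLinearMap.snd ℝ (Fin q → ℝ) ℝ)))) (β, ρ) :=
          hmul.congr_of_eventuallyEq heq
        have htot := h1.add hpen
        have hfun : (fun z : (Fin q → ℝ) × ℝ => F z.1 z.2 j)
            = fun z : (Fin q → ℝ) × ℝ => fderiv ℝ f z.1 (Pi.single j 1)
              + Pt |z.1 j| z.2 * Real.sign (z.1 j) := by
          funext z
          rw [hF, if_pos hj]
        rw [hfun]
        refine htot.congr_fderiv ?_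
        symm
        -- equality of the derivatives
        apply ContinuousLinearMap.ext
        rintro ⟨b, r⟩
        simp only [ContinuousLinearMap.comp_apply, ContinuousLinearMap.add_apply,
          ContinuousLinearMap.coe_fst', ContinuousLinearMap.coe_snd',
          ContinuousLinearMap.smul_apply, ContinuousLinearMap.prod_apply,
          ContinuousLinearMap.proj_apply, pathToL_apply, smul_eq_mul]
        show (H β ρ *ᵥ b) j + r * u β ρ j
          = fderiv ℝ (fderiv ℝ f) β b (Pi.single j 1)
            + s * (Ptt |β j| ρ * (s * b j) + Ptρ |β j| ρ * r)
        have hmv : (H β ρ *ᵥ b) j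
            = (∑ k, fderiv ℝ (fderiv ℝ f) β (Pi.single j 1) (Pi.single k 1) * b k)
              + Ptt |β j| ρ * b j := by
          have hrow : ∀ k, H β ρ j k
              = fderiv ℝ (fderiv ℝ f) β (Pi.single j 1) (Pi.single k 1)
                + (if j = k then Ptt |β j| ρ else 0) := fun k => by
            rw [hH, hHf]
            congr 1
            by_cases hjk : j = k
            · subst hjk; simp [hj]
            · simp [hjk]
          simp only [Matrix.mulVec, dotProduct, hrow, add_mul, Finset.sum_add_distrib,
            ite_mul, zero_mul]
          simp [Finset.sum_ite_eq]
        rw [hmv, ← hexp]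
        have : s * (Ptt |β j| ρ * (s * b j) + Ptρ |β j| ρ * r)
            = (s * s) * (Ptt |β j| ρ * b j) + s * (Ptρ |β j| ρ * r) := by ring
        rw [this, hs2, one_mul, hu, if_pos hj]
        ring
      · -- unpenalized coordinate
        have hfun : (fun z : (Fin q → ℝ) × ℝ => F z.1 z.2 j)
            = fun z : (Fin q → ℝ) × ℝ => fderiv ℝ f z.1 (Pi.single j 1) := by
          funext z
          rw [hF, if_neg hj, add_zero]
        rw [hfun]
        refine h1.congr_fderiv ?_
        symm
        apply ContinuousLinearMap.ext
        rintro ⟨b, r⟩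
        simp only [ContinuousLinearMap.comp_apply, ContinuousLinearMap.coe_fst',
          ContinuousLinearMap.proj_apply, pathToL_apply]
        show (H β ρ *ᵥ b) j + r * u β ρ j
          = fderiv ℝ (fderiv ℝ f) β b (Pi.single j 1)
        have hmv : (H β ρ *ᵥ b) j
            = ∑ k, fderiv ℝ (fderiv ℝ f) β (Pi.single j 1) (Pi.single k 1) * b k := by
          simp only [Matrix.mulVec, dotProduct]
          refine Finset.sum_congr rfl fun k _ => ?_
          rw [hH, hHf]
          have : ¬(j = k ∧ j ∈ SZ) := fun h => hj h.2
          rw [if_neg this, add_zero]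
        rw [hmv, ← hexp, hu, if_neg hj]
        ring
    -- assemble into the product map
    have hG : HasFDerivAt (fun z : (Fin q → ℝ) × ℝ => F z.1 z.2)
        ((ContinuousLinearMap.fst ℝ (Fin q → ℝ) ℝ).comp (pathToL (H β ρ) (u β ρ))) (β, ρ) := by
      apply hasFDerivAt_pi''
      intro j
      exact hcomp j
    have hsnd : HasFDerivAt (fun z : (Fin q → ℝ) × ℝ => z.2)
        ((ContinuousLinearMap.snd ℝ (Fin q → ℝ) ℝ).comp (pathToL (H β ρ) (u β ρ))) (β, ρ) := by
      exact (hasFDerivAt_snd (𝕜 := ℝ) (E := Fin q → ℝ) (F := ℝ)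
        (p := ((β, ρ) : (Fin q → ℝ) × ℝ)))
    exact hG.prodMk hsnd
  -- continuity of the second derivative entries
  have hHfcont : ∀ j k : Fin q, Continuous (fun z : (Fin q → ℝ) × ℝ =>
      fderiv ℝ (fderiv ℝ f) z.1 (Pi.single j 1) (Pi.single k 1)) := by
    intro j k
    exact Continuous.clm_apply
      (Continuous.clm_apply (hf''cont.comp continuous_fst) continuous_const)
      continuous_const
  have hmapsTo : ∀ j ∈ SZ, Set.MapsTo (fun z : (Fin q → ℝ) × ℝ => (|z.1 j|, z.2)) GS
      (Set.Ioi 0 ×ˢ I) := fun j hj z hz => ⟨abs_pos.2 (hz.1 j hj), hz.2⟩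
  have habs : ∀ j : Fin q, Continuous (fun z : (Fin q → ℝ) × ℝ => ((|z.1 j|, z.2) : ℝ × ℝ)) :=
    fun j => (((continuous_apply j).comp continuous_fst).abs).prodMk continuous_snd
  have hPttGS : ∀ j ∈ SZ, ContinuousOn (fun z : (Fin q → ℝ) × ℝ => Ptt |z.1 j| z.2) GS :=
    fun j hj => hPttCont.comp (habs j).continuousOn (hmapsTo j hj)
  have hPtρGS : ∀ j ∈ SZ, ContinuousOn (fun z : (Fin q → ℝ) × ℝ => Ptρ |z.1 j| z.2) GS :=
    fun j hj => hPtρCont.comp (habs j).continuousOn (hmapsTo j hj)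
  have hsigncont : ∀ j ∈ SZ, ContinuousOn
      (fun z : (Fin q → ℝ) × ℝ => Real.sign (z.1 j)) GS := by
    intro j hj z hz
    apply ContinuousAt.continuousWithinAt
    have hne : z.1 j ≠ 0 := hz.1 j hj
    have hc : Continuous fun w : (Fin q → ℝ) × ℝ => w.1 j :=
      (continuous_apply j).comp continuous_fst
    have hev : ∀ᶠ w : (Fin q → ℝ) × ℝ in nhds z, Real.sign (w.1 j) = Real.sign (z.1 j) := by
      rcases hne.lt_or_gt with h | h
      · have hev' : ∀ᶠ w : (Fin q → ℝ) × ℝ in nhds z, w.1 j < 0 :=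
          hc.continuousAt.eventually_lt continuousAt_const h
        filter_upwards [hev'] with w hw
        rw [Real.sign_of_neg hw, Real.sign_of_neg h]
      · have hev' : ∀ᶠ w : (Fin q → ℝ) × ℝ in nhds z, 0 < w.1 j :=
          continuousAt_const.eventually_lt hc.continuousAt h
        filter_upwards [hev'] with w hw
        rw [Real.sign_of_pos hw, Real.sign_of_pos h]
    have hev' : (fun w : (Fin q → ℝ) × ℝ => Real.sign (w.1 j)) =ᶠ[nhds z]
        (fun _ => Real.sign (z.1 j)) := hev
    exact hev'.continuousAt
  -- continuity of H and u on GS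
  have hHcont : ContinuousOn (fun z : (Fin q → ℝ) × ℝ => H z.1 z.2) GS := by
    apply continuousOn_pi.2
    intro j
    apply continuousOn_pi.2
    intro k
    have hentry : ∀ z : (Fin q → ℝ) × ℝ, H z.1 z.2 j k
        = fderiv ℝ (fderiv ℝ f) z.1 (Pi.single j 1) (Pi.single k 1)
          + (if j = k ∧ j ∈ SZ then Ptt |z.1 j| z.2 else 0) := fun z => by rw [hH, hHf]
    simp only [hentry]
    refine ContinuousOn.add (hHfcont j k).continuousOn ?_
    by_cases hc : j = k ∧ j ∈ SZ
    · simp only [if_pos hc]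
      exact hPttGS j hc.2
    · simp only [if_neg hc]
      exact continuousOn_const
  have hucont : ContinuousOn (fun z : (Fin q → ℝ) × ℝ => u z.1 z.2) GS := by
    apply continuousOn_pi.2
    intro j
    simp only [hu]
    by_cases hj : j ∈ SZ
    · simp only [if_pos hj]
      exact (hPtρGS j hj).mul (hsigncont j hj)
    · simp only [if_neg hj]
      exact continuousOn_const
  -- continuity of the derivative map
  have hLcont : ContinuousOn
      (fun z : (Fin q → ℝ) × ℝ => pathToL (H z.1 z.2) (u z.1 z.2)) GS := by
    have h1 : Continuous (fun Mw : Matrix (Fin q) (Fin q) ℝ × (Fin q → ℝ) => pathT q Mw) :=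
      (pathT q).continuous_of_finiteDimensional
    have h2 : ContinuousOn (fun z : (Fin q → ℝ) × ℝ =>
        ((H z.1 z.2, u z.1 z.2) : Matrix (Fin q) (Fin q) ℝ × (Fin q → ℝ))) GS :=
      hHcont.prodMk hucont
    have heq : (fun z : (Fin q → ℝ) × ℝ => pathToL (H z.1 z.2) (u z.1 z.2))
        = fun z => pathT q (H z.1 z.2, u z.1 z.2)
          + ((0 : ((Fin q → ℝ) × ℝ) →L[ℝ] (Fin q → ℝ)).prod
              (ContinuousLinearMap.snd ℝ (Fin q → ℝ) ℝ)) := funext fun z => pathToL_eq _ _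
    rw [heq]
    exact (h1.comp_continuousOn h2).add continuousOn_const
  -- Φ is C¹ on GS
  have hdiffOn : DifferentiableOn ℝ Φ GS := fun z hz =>
    (hΦderiv z hz).differentiableAt.differentiableWithinAt
  have hC1 : ContDiffOn ℝ 1 Φ GS := by
    rw [← zero_add (1 : WithTop ℕ∞)]
    refine (contDiffOn_succ_iff_fderiv_of_isOpen hGSopen).2 ⟨hdiffOn, ?_, ?_⟩
    · intro h
      simp at h
    · rw [contDiffOn_zero]
      exact hLcont.congr fun z hz => (hΦderiv z hz).fderiv
  have hC1at : ∀ z ∈ GS, ContDiffAt ℝ 1 Φ z := fun z hz =>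
    (hC1 z hz).contDiffAt (hGSopen.mem_nhds hz)
  -- the set where H is invertible
  have hdetcont : ContinuousOn (fun z : (Fin q → ℝ) × ℝ => (H z.1 z.2).det) GS :=
    continuous_id.matrix_det.comp_continuousOn hHcont
  set W : Set ((Fin q → ℝ) × ℝ) :=
    GS ∩ (fun z : (Fin q → ℝ) × ℝ => (H z.1 z.2).det) ⁻¹' {x : ℝ | x ≠ 0} with hWdef
  have hWopen : IsOpen W := hdetcont.isOpen_inter_preimage hGSopen isOpen_ne
  have hWsub : W ⊆ GS := Set.inter_subset_left
  have hdet : ∀ z ∈ W, IsUnit (H z.1 z.2).det := fun z hz => isUnit_iff_ne_zero.2 hz.2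
  have hΦeqv : ∀ z (hz : z ∈ W), HasFDerivAt Φ
      ((pathCLE (H z.1 z.2) (u z.1 z.2) (hdet z hz) :
        ((Fin q → ℝ) × ℝ) ≃L[ℝ] ((Fin q → ℝ) × ℝ)) :
          ((Fin q → ℝ) × ℝ) →L[ℝ] ((Fin q → ℝ) × ℝ)) z := fun z hz => by
    rw [pathCLE_coe]
    exact hΦderiv z (hWsub hz)
  have hz₀GS : ((β₀, ρ₀) : (Fin q → ℝ) × ℝ) ∈ GS := ⟨hβ₀, hρ₀⟩
  have hz₀W : ((β₀, ρ₀) : (Fin q → ℝ) × ℝ) ∈ W := ⟨hz₀GS, hpd.det_pos.ne'⟩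
  -- strict differentiability at the base point and partial homeomorphism
  have hstrict : HasStrictFDerivAt Φ
      ((pathCLE (H β₀ ρ₀) (u β₀ ρ₀) (hdet _ hz₀W) :
        ((Fin q → ℝ) × ℝ) ≃L[ℝ] ((Fin q → ℝ) × ℝ)) :
          ((Fin q → ℝ) × ℝ) →L[ℝ] ((Fin q → ℝ) × ℝ)) (β₀, ρ₀) :=
    (hC1at _ hz₀GS).hasStrictFDerivAt' (hΦeqv _ hz₀W) (by norm_num)
  set Ph := hstrict.toOpenPartialHomeomorph Φ with hPhdef
  have hPhcoe : ⇑Ph = Φ := hstrict.toOpenPartialHomeomorph_coe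
  have hΦz₀ : Φ (β₀, ρ₀) = (((0 : Fin q → ℝ), ρ₀) : (Fin q → ℝ) × ℝ) := by
    rw [hΦdef]
    exact Prod.ext hstat rfl
  have hsource : ((β₀, ρ₀) : (Fin q → ℝ) × ℝ) ∈ Ph.source :=
    hstrict.mem_toOpenPartialHomeomorph_source
  have htar₀ : (((0 : Fin q → ℝ), ρ₀) : (Fin q → ℝ) × ℝ) ∈ Ph.target := by
    rw [← hΦz₀]
    exact hstrict.image_mem_toOpenPartialHomeomorph_target
  have hsymmz₀ : Ph.symm (((0 : Fin q → ℝ), ρ₀) : (Fin q → ℝ) × ℝ) = (β₀, ρ₀) := by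
    have h := Ph.left_inv hsource
    rw [hPhcoe, hΦz₀] at h
    exact h
  -- choose ε
  have hcont0r : Continuous (fun r : ℝ => (((0 : Fin q → ℝ), r) : (Fin q → ℝ) × ℝ)) :=
    continuous_const.prodMk continuous_id
  have hsymcont : ContinuousAt (fun r : ℝ => Ph.symm (((0 : Fin q → ℝ), r))) ρ₀ :=
    (Ph.continuousAt_symm htar₀).comp hcont0r.continuousAt
  have hev : ∀ᶠ r in nhds ρ₀, (((0 : Fin q → ℝ), r) : (Fin q → ℝ) × ℝ) ∈ Ph.target
      ∧ Ph.symm (((0 : Fin q → ℝ), r)) ∈ W := by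
    have h1 : ∀ᶠ r in nhds ρ₀, (((0 : Fin q → ℝ), r) : (Fin q → ℝ) × ℝ) ∈ Ph.target :=
      hcont0r.continuousAt.eventually_mem (Ph.open_target.mem_nhds htar₀)
    have h2 : ∀ᶠ r in nhds ρ₀, Ph.symm (((0 : Fin q → ℝ), r)) ∈ W :=
      hsymcont.eventually_mem (hWopen.mem_nhds (by rw [hsymmz₀]; exact hz₀W))
    exact h1.and h2
  obtain ⟨ε, hεpos, hε⟩ := Metric.eventually_nhds_iff.1 hev
  have hIooDist : ∀ ρ ∈ Set.Ioo (ρ₀ - ε) (ρ₀ + ε), dist ρ ρ₀ < ε := by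
    intro ρ hρ
    rw [Real.dist_eq, abs_sub_lt_iff]
    exact ⟨by linarith [hρ.2], by linarith [hρ.1]⟩
  refine ⟨ε, hεpos, fun ρ => (Ph.symm (((0 : Fin q → ℝ), ρ))).1, ?_, ?_, ?_⟩
  · show (Ph.symm (((0 : Fin q → ℝ), ρ₀))).1 = β₀
    rw [hsymmz₀]
  · -- C¹ regularity of the curve
    intro ρ hρ
    obtain ⟨hytar, hzW⟩ := hε (hIooDist ρ hρ)
    set z := Ph.symm (((0 : Fin q → ℝ), ρ)) with hzdef
    have hsymCD : ContDiffAt ℝ 1 Ph.symm (((0 : Fin q → ℝ), ρ)) := by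
      refine Ph.contDiffAt_symm
        (f₀' := pathCLE (H z.1 z.2) (u z.1 z.2) (hdet _ hzW)) hytar ?_ ?_
      · show HasFDerivAt Ph _ _
        rw [hPhcoe]
        exact hΦeqv _ hzW
      · rw [hPhcoe]
        exact hC1at _ (hWsub hzW)
    have h0r : ContDiffAt ℝ 1 (fun r : ℝ => (((0 : Fin q → ℝ), r) : (Fin q → ℝ) × ℝ)) ρ :=
      (contDiff_const.prodMk contDiff_id).contDiffAt
    exact ((contDiff_fst.contDiffAt).comp ρ (hsymCD.comp ρ h0r)).contDiffWithinAt
  · -- pointwise properties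
    intro ρ hρ
    obtain ⟨hytar, hzW⟩ := hε (hIooDist ρ hρ)
    set z := Ph.symm (((0 : Fin q → ℝ), ρ)) with hzdef
    have hrinv : Φ z = (((0 : Fin q → ℝ), ρ) : (Fin q → ℝ) × ℝ) := by
      have h := Ph.right_inv hytar
      rwa [hPhcoe] at h
    have hz2 : z.2 = ρ := by
      have h := congrArg Prod.snd hrinv
      simpa [hΦdef] using h
    have hF0 : F z.1 z.2 = 0 := by
      have h := congrArg Prod.fst hrinv
      simpa [hΦdef] using h
    refine ⟨fun j hj => (hWsub hzW).1 j hj, ?_, ?_⟩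
    · show F z.1 ρ = 0
      rw [← hz2]
      exact hF0
    · -- derivative of the curve
      have hsymF : HasFDerivAt Ph.symm
          (((pathCLE (H z.1 z.2) (u z.1 z.2) (hdet _ hzW)).symm :
            ((Fin q → ℝ) × ℝ) →L[ℝ] ((Fin q → ℝ) × ℝ))) (((0 : Fin q → ℝ), ρ)) := by
        refine Ph.hasFDerivAt_symm hytar ?_
        show HasFDerivAt Ph _ _
        rw [hPhcoe]
        exact hΦeqv _ hzW
      have hcv : HasDerivAt (fun r : ℝ => (((0 : Fin q → ℝ), r) : (Fin q → ℝ) × ℝ))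
          (((0 : Fin q → ℝ), (1 : ℝ))) ρ :=
        (hasDerivAt_const ρ (0 : Fin q → ℝ)).prodMk (hasDerivAt_id ρ)
      have hchain := hsymF.comp_hasDerivAt ρ hcv
      have hfst := ((ContinuousLinearMap.fst ℝ (Fin q → ℝ) ℝ).hasFDerivAt).comp_hasDerivAt ρ hchain
      refine hfst.congr_deriv ?_
      symm
      simp only [ContinuousLinearEquiv.coe_coe, pathCLE_symm_apply]
      simp [hz2, Matrix.mulVec_zero]
      rfl
end
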